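/- arXiv:1910.06886 — 3 statements merged into one kernel-verified Lean document; each statement's English description precedes it below -/
import Mathlib

section
/- Let g be a conformal (holomorphic injective) map from the open unit disk D to ℂ with image of finite area. For X₁ on the unit circle and 0 < r < 1/2, let l(r) denote the length of the image under g of the circular arc C(r) = D ∩ {z : |z - X₁| = r}. Then the integral ∫₀^{1/2} l(r)²/r dr is finite. -/
open Set MeasureTheory Complex Real
open scoped ENNReal symmDiff

namespace Stmt5Aux

noncomputable def F (g : ℂ → ℂ) : ℂ → ℝ≥0∞ := fun z => (‖deriv g z‖₊ : ℝ≥0∞) ^ 2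

noncomputable def ψ (X₁ : ℂ) (p : ℝ × ℝ) : ℂ := X₁ + p.1 * Complex.exp (p.2 * Complex.I)

def S (X₁ : ℂ) (r : ℝ) : Set ℝ :=
  {t : ℝ | t ∈ Set.Icc 0 (2 * π) ∧ X₁ + r * Complex.exp (t * Complex.I) ∈ Metric.ball (0:ℂ) 1}

def U (X₁ : ℂ) : Set (ℝ × ℝ) :=
  {p | p.1 ∈ Ioo (0:ℝ) (1/2) ∧ p.2 ∈ Ioo 0 (2*π) ∧ ψ X₁ p ∈ Metric.ball (0:ℂ) 1}

def T (X₁ : ℂ) (r : ℝ) : Set ℝ :=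
  {t : ℝ | t ∈ Set.Ioo 0 (2 * π) ∧ ψ X₁ (r, t) ∈ Metric.ball (0:ℂ) 1}

noncomputable def φ (X₁ : ℂ) (p : ℝ × ℝ) : ℝ × ℝ := (X₁.re, X₁.im) + polarCoord.symm p

lemma det_mul_right (a : ℂ) :
    ((ContinuousLinearMap.smulRight (1 : ℂ →L[ℂ] ℂ) a).restrictScalars ℝ).det
      = Complex.normSq a := by
  have h : (((ContinuousLinearMap.smulRight (1 : ℂ →L[ℂ] ℂ) a).restrictScalars ℝ :
      ℂ →L[ℝ] ℂ) : ℂ →ₗ[ℝ] ℂ) = Algebra.lmul ℝ ℂ a := by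
    ext z
    simp [mul_comm]
  rw [ContinuousLinearMap.det, h, ← Algebra.norm_apply, Algebra.norm_complex_apply]

lemma area_eq (g : ℂ → ℂ) (hg : DifferentiableOn ℂ g (Metric.ball (0 : ℂ) 1))
    (hinj : Set.InjOn g (Metric.ball (0 : ℂ) 1)) :
    ∫⁻ z in Metric.ball (0 : ℂ) 1, F g z = volume (g '' Metric.ball (0 : ℂ) 1) := by
  have hfd : ∀ x ∈ Metric.ball (0 : ℂ) 1, HasFDerivWithinAt g
      ((ContinuousLinearMap.smulRight (1 : ℂ →L[ℂ] ℂ) (deriv g x)).restrictScalars ℝ)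
      (Metric.ball (0 : ℂ) 1) x := by
    intro x hx
    have hdx : DifferentiableAt ℂ g x :=
      (hg x hx).differentiableAt (Metric.isOpen_ball.mem_nhds hx)
    exact ((hdx.hasDerivAt.hasFDerivAt).restrictScalars ℝ).hasFDerivWithinAt
  have him := lintegral_image_eq_lintegral_abs_det_fderiv_mul volume
    Metric.isOpen_ball.measurableSet hfd hinj (fun _ => 1)
  rw [setLIntegral_one] at him
  rw [him]
  apply setLIntegral_congr_fun Metric.isOpen_ball.measurableSet
  intro x _
  dsimp only
  rw [det_mul_right, mul_one, F]
  rw [_root_.abs_of_nonneg (Complex.normSq_nonneg _), Complex.normSq_eq_norm_sq,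
    ENNReal.ofReal_pow (norm_nonneg _),
    ofReal_norm, enorm_eq_nnnorm]

lemma phi_eq (X₁ : ℂ) (p : ℝ × ℝ) :
    Complex.measurableEquivRealProd (ψ X₁ p) = φ X₁ p := by
  simp only [ψ, φ, Complex.exp_mul_I]
  ext <;>
  simp [Complex.measurableEquivRealProd, Complex.equivRealProd_apply,
    Complex.cos_ofReal_re, Complex.sin_ofReal_re, mul_comm]

lemma continuous_psi (X₁ : ℂ) : Continuous (ψ X₁) := by
  unfold ψ; fun_prop

lemma isOpen_U (X₁ : ℂ) : IsOpen (U X₁) := by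
  apply IsOpen.inter (isOpen_Ioo.preimage continuous_fst)
  exact IsOpen.inter (isOpen_Ioo.preimage continuous_snd)
    (Metric.isOpen_ball.preimage (continuous_psi X₁))

lemma injOn_psi (X₁ : ℂ) : Set.InjOn (ψ X₁) (U X₁) := by
  rintro p hp q hq hpq
  simp only [ψ] at hpq
  have h1 : (p.1 : ℂ) * Complex.exp (p.2 * Complex.I)
      = (q.1 : ℂ) * Complex.exp (q.2 * Complex.I) := by
    have := hpq
    linear_combination this
  have habs : p.1 = q.1 := by
    have := congrArg (‖·‖) h1
    simpa [Complex.norm_exp, _root_.abs_of_pos hp.1.1, _root_.abs_of_pos hq.1.1] using this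
  have hr0 : (p.1 : ℂ) ≠ 0 := by
    exact_mod_cast ne_of_gt hp.1.1
  have hexp : Complex.exp (p.2 * Complex.I) = Complex.exp (q.2 * Complex.I) := by
    rw [habs] at h1
    have hq0 : (q.1 : ℂ) ≠ 0 := by exact_mod_cast ne_of_gt hq.1.1
    exact mul_left_cancel₀ hq0 h1
  rw [Complex.exp_eq_exp_iff_exists_int] at hexp
  obtain ⟨n, hn⟩ := hexp
  have hn' : p.2 = q.2 + n * (2 * π) := by
    have : (p.2 : ℂ) = (q.2 : ℂ) + (n : ℂ) * (2 * π) := by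
      have hI : (Complex.I : ℂ) ≠ 0 := Complex.I_ne_zero
      have hn2 : (p.2 : ℂ) * Complex.I = ((q.2 : ℂ) + (n : ℂ) * (2 * π)) * Complex.I := by
        rw [hn]; ring
      exact mul_right_cancel₀ hI hn2
    exact_mod_cast this
  have h2 : p.2 = q.2 := by
    have hb1 := hp.2.1
    have hb2 := hq.2.1
    have hπ := Real.pi_pos
    have hn0 : n = 0 := by
      rcases lt_trichotomy n 0 with h | h | h
      · have : (n : ℝ) ≤ -1 := by exact_mod_cast (by omega : n ≤ -1)
        nlinarith [hb1.1, hb2.2]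
      · exact h
      · have : (1 : ℝ) ≤ (n : ℝ) := by exact_mod_cast h
        nlinarith [hb1.2, hb2.1]
    simp [hn0] at hn'
    exact hn'
  exact Prod.ext habs h2

lemma psi_image_subset (X₁ : ℂ) : ψ X₁ '' U X₁ ⊆ Metric.ball (0:ℂ) 1 := by
  rintro z ⟨p, hp, rfl⟩
  exact hp.2.2

lemma coarea (g : ℂ → ℂ) (X₁ : ℂ) :
    ∫⁻ p in U X₁, ENNReal.ofReal p.1 * F g (ψ X₁ p)
      ≤ ∫⁻ z in Metric.ball (0:ℂ) 1, F g z := by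
  set B : ℝ × ℝ → ℝ × ℝ →L[ℝ] ℝ × ℝ := fun p =>
    LinearMap.toContinuousLinearMap (Matrix.toLin (Module.Basis.finTwoProd ℝ) (Module.Basis.finTwoProd ℝ)
      !![Real.cos p.2, -p.1 * Real.sin p.2; Real.sin p.2, p.1 * Real.cos p.2]) with hB
  have hBdet : ∀ p, (B p).det = p.1 := by
    intro p
    conv_rhs => rw [← one_mul p.1, ← Real.cos_sq_add_sin_sq p.2]
    simp only [hB, neg_mul, LinearMap.det_toContinuousLinearMap, LinearMap.det_toLin,
      Matrix.det_fin_two_of, sub_neg_eq_add]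
    ring
  have hφ : ∀ p ∈ U X₁, HasFDerivWithinAt (φ X₁) (B p) (U X₁) p := by
    intro p _
    exact ((hasFDerivAt_polarCoord_symm p).const_add (X₁.re, X₁.im)).hasFDerivWithinAt
  have hinjφ : Set.InjOn (φ X₁) (U X₁) := by
    intro p hp q hq h
    apply injOn_psi X₁ hp hq
    apply Complex.measurableEquivRealProd.injective
    rw [phi_eq, phi_eq, h]
  have key := lintegral_image_eq_lintegral_abs_det_fderiv_mul volume
    (isOpen_U X₁).measurableSet hφ hinjφ
    (fun q => F g (Complex.measurableEquivRealProd.symm q))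
  have hLHS : ∫⁻ p in U X₁, ENNReal.ofReal p.1 * F g (ψ X₁ p)
      = ∫⁻ q in φ X₁ '' U X₁, F g (Complex.measurableEquivRealProd.symm q) := by
    rw [key]
    apply setLIntegral_congr_fun (isOpen_U X₁).measurableSet
    intro p hp
    dsimp only
    rw [hBdet, _root_.abs_of_pos hp.1.1, ← phi_eq, MeasurableEquiv.symm_apply_apply]
  rw [hLHS]
  have himg : φ X₁ '' U X₁ = Complex.measurableEquivRealProd '' (ψ X₁ '' U X₁) := by
    rw [Set.image_image]
    exact Set.image_congr fun p _ => (phi_eq X₁ p).symm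
  rw [himg]
  have hmp := Complex.volume_preserving_equiv_real_prod
  rw [← hmp.setLIntegral_comp_emb Complex.measurableEquivRealProd.measurableEmbedding
    (fun q => F g (Complex.measurableEquivRealProd.symm q)) (ψ X₁ '' U X₁)]
  simp only [MeasurableEquiv.symm_apply_apply]
  exact lintegral_mono_set (psi_image_subset X₁)

lemma measurableSet_S (X₁ : ℂ) (r : ℝ) : MeasurableSet (S X₁ r) := by
  apply MeasurableSet.inter measurableSet_Icc
  have : Continuous fun t : ℝ => X₁ + (r : ℂ) * Complex.exp (t * Complex.I) := by fun_prop
  exact (Metric.isOpen_ball.preimage this).measurableSet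

lemma measurable_Fpsi (g : ℂ → ℂ) (X₁ : ℂ) : Measurable fun p : ℝ × ℝ => F g (ψ X₁ p) := by
  have h1 : Measurable (deriv g) := measurable_deriv g
  exact ((h1.comp (continuous_psi X₁).measurable).nnnorm.coe_nnreal_ennreal).pow_const 2

lemma measurableSet_T (X₁ : ℂ) (r : ℝ) : MeasurableSet (T X₁ r) := by
  apply MeasurableSet.inter measurableSet_Ioo
  have : Continuous fun t : ℝ => ψ X₁ (r, t) :=
    (continuous_psi X₁).comp (continuous_const.prodMk continuous_id)
  exact (Metric.isOpen_ball.preimage this).measurableSet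

lemma restrict_S_eq_T (X₁ : ℂ) (r : ℝ) :
    volume.restrict (S X₁ r) = volume.restrict (T X₁ r) := by
  apply Measure.restrict_congr_set
  have hsub : (S X₁ r) ∆ (T X₁ r) ⊆ {0, 2*π} := by
    intro t ht
    rcases ht with ⟨hS, hT⟩ | ⟨hT, hS⟩
    · by_contra hne
      simp only [Set.mem_insert_iff, Set.mem_singleton_iff, not_or] at hne
      exact hT ⟨⟨lt_of_le_of_ne hS.1.1 (Ne.symm hne.1), lt_of_le_of_ne hS.1.2 hne.2⟩, hS.2⟩
    · exact absurd ⟨⟨hT.1.1.le, hT.1.2.le⟩, hT.2⟩ hS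
  have : volume ((S X₁ r) ∆ (T X₁ r)) = 0 :=
    measure_mono_null hsub (by simp [Set.Countable.measure_zero])
  rwa [← measure_symmDiff_eq_zero_iff]

lemma T_eq_section (X₁ : ℂ) {r : ℝ} (hr : r ∈ Ioo (0:ℝ) (1/2)) (t : ℝ) :
    t ∈ T X₁ r ↔ (r, t) ∈ U X₁ := by
  constructor
  · rintro ⟨h1, h2⟩; exact ⟨hr, h1, h2⟩
  · rintro ⟨_, h1, h2⟩; exact ⟨h1, h2⟩

lemma pointwise_bound (g : ℂ → ℂ) (X₁ : ℂ) (l : ℝ → ℝ)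
    (hl : ∀ r, l r = ∫ t in S X₁ r,
        ‖deriv g (X₁ + r * Complex.exp (t * Complex.I))‖ * r)
    {r : ℝ} (hr : r ∈ Set.Ioo (0:ℝ) (1/2)) :
    ENNReal.ofReal (l r ^ 2 / r)
      ≤ ENNReal.ofReal (2 * π) * ∫⁻ t in S X₁ r, F g (ψ X₁ (r, t)) * ENNReal.ofReal r := by
  have hr0 : 0 < r := hr.1
  set μ := volume.restrict (S X₁ r) with hμ
  set h : ℝ → ℝ≥0∞ := fun t => (‖deriv g (ψ X₁ (r, t))‖₊ : ℝ≥0∞) * ENNReal.ofReal r with hh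
  have hmh : Measurable h := by
    have h1 : Measurable (deriv g) := measurable_deriv g
    have h2 : Continuous fun t : ℝ => ψ X₁ (r, t) :=
      (continuous_psi X₁).comp (continuous_const.prodMk continuous_id)
    exact ((h1.comp h2.measurable).nnnorm.coe_nnreal_ennreal).mul_const _
  have hl_nonneg : 0 ≤ l r := by
    rw [hl r]
    apply integral_nonneg
    intro t
    exact mul_nonneg (norm_nonneg _) hr0.le
  have step1 : ENNReal.ofReal (l r) ≤ ∫⁻ t, h t ∂μ := by
    have hmeas : AEStronglyMeasurable
        (fun t : ℝ => ‖deriv g (X₁ + (r:ℂ) * Complex.exp ((t:ℂ) * Complex.I))‖ * r)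
        μ := by
      apply Measurable.aestronglyMeasurable
      have h1 : Measurable (deriv g) := measurable_deriv g
      have h2 : Continuous fun t : ℝ => X₁ + (r:ℂ) * Complex.exp (t * Complex.I) := by fun_prop
      exact ((h1.comp h2.measurable).norm.mul_const r)
    have := integral_eq_lintegral_of_nonneg_ae (μ := μ)
      (f := fun t : ℝ => ‖deriv g (X₁ + (r:ℂ) * Complex.exp ((t:ℂ) * Complex.I))‖ * r)
      (Filter.Eventually.of_forall fun t => mul_nonneg (norm_nonneg _) hr0.le) hmeas
    rw [hl r, this]
    refine le_trans ENNReal.ofReal_toReal_le (le_of_eq ?_)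
    apply lintegral_congr
    intro t
    rw [ENNReal.ofReal_mul (norm_nonneg _)]
    congr 1
    rw [ofReal_norm]
    rfl
  have hconj : Real.HolderConjugate 2 2 := Real.HolderConjugate.two_two
  have cs := ENNReal.lintegral_mul_le_Lp_mul_Lq μ hconj
    (f := fun _ => (1:ℝ≥0∞)) (g := h) aemeasurable_const hmh.aemeasurable
  simp only [one_mul, ENNReal.one_rpow, Pi.mul_apply] at cs
  have hμuniv : μ Set.univ ≤ ENNReal.ofReal (2 * π) := by
    rw [hμ, Measure.restrict_apply_univ]
    calc volume (S X₁ r) ≤ volume (Set.Icc (0:ℝ) (2*π)) :=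
          measure_mono fun t ht => ht.1
      _ = ENNReal.ofReal (2*π) := by rw [Real.volume_Icc, sub_zero]
  have cs1 : ∫⁻ t, h t ∂μ ≤ (ENNReal.ofReal (2*π)) ^ ((1:ℝ)/2) *
      (∫⁻ t, h t ^ (2:ℝ) ∂μ) ^ ((1:ℝ)/2) := by
    refine le_trans cs ?_
    gcongr
    calc ∫⁻ _, (1:ℝ≥0∞) ∂μ = μ Set.univ := by simp
      _ ≤ ENNReal.ofReal (2*π) := hμuniv
  have hsq : ∀ a : ℝ≥0∞, (a ^ ((1:ℝ)/2)) ^ (2:ℕ) = a := by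
    intro a
    rw [← ENNReal.rpow_natCast (a ^ ((1:ℝ)/2)) 2, ← ENNReal.rpow_mul]
    norm_num
  have step2 : ENNReal.ofReal (l r) ^ (2:ℕ)
      ≤ ENNReal.ofReal (2*π) * ∫⁻ t, h t ^ (2:ℕ) ∂μ := by
    calc ENNReal.ofReal (l r) ^ (2:ℕ) ≤ (∫⁻ t, h t ∂μ) ^ (2:ℕ) := by gcongr
      _ ≤ ((ENNReal.ofReal (2*π)) ^ ((1:ℝ)/2) * (∫⁻ t, h t ^ (2:ℝ) ∂μ) ^ ((1:ℝ)/2)) ^ (2:ℕ) := by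
          gcongr
      _ = ENNReal.ofReal (2*π) * ∫⁻ t, h t ^ (2:ℝ) ∂μ := by
          rw [mul_pow, hsq, hsq]
      _ = ENNReal.ofReal (2*π) * ∫⁻ t, h t ^ (2:ℕ) ∂μ := by
          congr 1
          apply lintegral_congr
          intro t
          rw [← ENNReal.rpow_natCast (h t) 2]
          norm_num
  have hint2 : ∫⁻ t, h t ^ (2:ℕ) ∂μ
      = (∫⁻ t, F g (ψ X₁ (r, t)) * ENNReal.ofReal r ∂μ) * ENNReal.ofReal r := by
    rw [← lintegral_mul_const' (ENNReal.ofReal r) _ ENNReal.ofReal_ne_top]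
    apply lintegral_congr
    intro t
    rw [hh, F]
    ring
  have hofr0 : ENNReal.ofReal r ≠ 0 := by
    simp [hr0, ENNReal.ofReal_eq_zero, not_le]
  rw [ENNReal.ofReal_div_of_pos hr0, ENNReal.ofReal_pow hl_nonneg]
  rw [ENNReal.div_le_iff hofr0 ENNReal.ofReal_ne_top]
  calc ENNReal.ofReal (l r) ^ 2 ≤ ENNReal.ofReal (2*π) * ∫⁻ t, h t ^ (2:ℕ) ∂μ := step2
    _ = ENNReal.ofReal (2*π) * ((∫⁻ t, F g (ψ X₁ (r, t)) * ENNReal.ofReal r ∂μ)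
          * ENNReal.ofReal r) := by rw [hint2]
    _ = ENNReal.ofReal (2*π) * (∫⁻ t in S X₁ r, F g (ψ X₁ (r, t)) * ENNReal.ofReal r)
          * ENNReal.ofReal r := by rw [hμ]; ring

end Stmt5Aux

open Stmt5Aux

/-- For a conformal map `g` of the unit disk with image of finite area, and `X₁` on the
unit circle, the length `l r` of the image of the circular arc `C(r) = D ∩ {|z - X₁| = r}`
satisfies `∫₀^{1/2} l(r)²/r dr < ∞`. -/
theorem stmt_5 (g : ℂ → ℂ)
    (hg : DifferentiableOn ℂ g (Metric.ball (0 : ℂ) 1))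
    (hinj : Set.InjOn g (Metric.ball (0 : ℂ) 1))
    (harea : volume (g '' Metric.ball (0 : ℂ) 1) < ⊤)
    (X₁ : ℂ) (hX₁ : ‖X₁‖ = 1)
    (l : ℝ → ℝ)
    (hl : ∀ r, l r = ∫ t in {t : ℝ | t ∈ Set.Icc 0 (2 * π) ∧
        X₁ + r * Complex.exp (t * Complex.I) ∈ Metric.ball (0 : ℂ) 1},
        ‖deriv g (X₁ + r * Complex.exp (t * Complex.I))‖ * r) :
    MeasureTheory.IntegrableOn (fun r => (l r) ^ 2 / r) (Set.Ioo 0 (1 / 2)) volume := by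
  classical
  have hlS : ∀ r, l r = ∫ t in S X₁ r,
      ‖deriv g (X₁ + r * Complex.exp (t * Complex.I))‖ * r := hl
  -- measurability of l
  set W : Set (ℝ × ℝ) := {p : ℝ × ℝ | p.2 ∈ Set.Icc 0 (2*π) ∧ ψ X₁ p ∈ Metric.ball (0:ℂ) 1}
    with hW
  have hWmeas : MeasurableSet W := by
    apply MeasurableSet.inter (measurableSet_Icc.preimage measurable_snd)
    exact (Metric.isOpen_ball.preimage (continuous_psi X₁)).measurableSet
  set K : ℝ × ℝ → ℝ := W.indicator (fun p => ‖deriv g (ψ X₁ p)‖ * p.1) with hK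
  have hKmeas : StronglyMeasurable K := by
    apply Measurable.stronglyMeasurable
    apply Measurable.indicator _ hWmeas
    exact ((measurable_deriv g).comp (continuous_psi X₁).measurable).norm.mul measurable_fst
  have hlK : ∀ r, l r = ∫ t, K (r, t) := by
    intro r
    rw [hlS r, ← integral_indicator (measurableSet_S X₁ r)]
    apply integral_congr_ae
    apply Filter.Eventually.of_forall
    intro t
    show Set.indicator _ _ t = K (r, t)
    by_cases ht : t ∈ S X₁ r
    · have htW : (r, t) ∈ W := ⟨ht.1, ht.2⟩
      rw [Set.indicator_of_mem ht, hK, Set.indicator_of_mem htW]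
      rfl
    · have htW : (r, t) ∉ W := fun hc => ht ⟨hc.1, hc.2⟩
      rw [Set.indicator_of_notMem ht, hK, Set.indicator_of_notMem htW]
  have hlmeas : StronglyMeasurable l := by
    have : l = fun r => ∫ t, K (r, t) := funext hlK
    rw [this]
    exact hKmeas.integral_prod_right'
  constructor
  · exact (((hlmeas.measurable.pow_const 2).div measurable_id).stronglyMeasurable
      ).aestronglyMeasurable
  -- finite integral
  rw [hasFiniteIntegral_iff_norm]
  have hstep : ∫⁻ r in Ioo (0:ℝ) (1/2), ENNReal.ofReal ‖l r ^ 2 / r‖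
      ≤ ENNReal.ofReal (2*π) *
        ∫⁻ r in Ioo (0:ℝ) (1/2), ∫⁻ t in S X₁ r, F g (ψ X₁ (r, t)) * ENNReal.ofReal r := by
    rw [← lintegral_const_mul' _ _ ENNReal.ofReal_ne_top]
    apply lintegral_mono_ae
    rw [ae_restrict_iff' measurableSet_Ioo]
    apply Filter.Eventually.of_forall
    intro r hr
    have hnorm : ‖l r ^ 2 / r‖ = l r ^ 2 / r := by
      rw [Real.norm_eq_abs, _root_.abs_of_nonneg (div_nonneg (sq_nonneg _) hr.1.le)]
    rw [hnorm]
    exact pointwise_bound g X₁ l hlS hr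
  have hstep2 : ∫⁻ r in Ioo (0:ℝ) (1/2), ∫⁻ t in S X₁ r, F g (ψ X₁ (r, t)) * ENNReal.ofReal r
      ≤ volume (g '' Metric.ball (0:ℂ) 1) := by
    have hfun : ∀ r ∈ Ioo (0:ℝ) (1/2),
        ∫⁻ t in S X₁ r, F g (ψ X₁ (r, t)) * ENNReal.ofReal r
        = ∫⁻ t, (U X₁).indicator (fun p => ENNReal.ofReal p.1 * F g (ψ X₁ p)) (r, t) := by
      intro r hr
      rw [restrict_S_eq_T, ← lintegral_indicator (measurableSet_T X₁ r)]
      apply lintegral_congr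
      intro t
      by_cases ht : t ∈ T X₁ r
      · rw [Set.indicator_of_mem ht, Set.indicator_of_mem ((T_eq_section X₁ hr t).1 ht),
          mul_comm]
      · rw [Set.indicator_of_notMem ht,
          Set.indicator_of_notMem (fun hc => ht ((T_eq_section X₁ hr t).2 hc))]
    calc ∫⁻ r in Ioo (0:ℝ) (1/2), ∫⁻ t in S X₁ r, F g (ψ X₁ (r, t)) * ENNReal.ofReal r
        = ∫⁻ r in Ioo (0:ℝ) (1/2),
            ∫⁻ t, (U X₁).indicator (fun p => ENNReal.ofReal p.1 * F g (ψ X₁ p)) (r, t) := by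
          apply setLIntegral_congr_fun measurableSet_Ioo
          exact hfun
      _ ≤ ∫⁻ r, ∫⁻ t, (U X₁).indicator (fun p => ENNReal.ofReal p.1 * F g (ψ X₁ p)) (r, t) :=
          setLIntegral_le_lintegral _ _
      _ = ∫⁻ p : ℝ × ℝ, (U X₁).indicator (fun p => ENNReal.ofReal p.1 * F g (ψ X₁ p)) p := by
          rw [MeasureTheory.Measure.volume_eq_prod, lintegral_prod]
          apply Measurable.aemeasurable
          apply Measurable.indicator _ (isOpen_U X₁).measurableSet
          exact (ENNReal.measurable_ofReal.comp measurable_fst).mul (measurable_Fpsi g X₁)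
      _ = ∫⁻ p in U X₁, ENNReal.ofReal p.1 * F g (ψ X₁ p) := by
          rw [lintegral_indicator (isOpen_U X₁).measurableSet]
      _ ≤ ∫⁻ z in Metric.ball (0:ℂ) 1, F g z := coarea g X₁
      _ = volume (g '' Metric.ball (0:ℂ) 1) := area_eq g hg hinj
  calc ∫⁻ r in Ioo (0:ℝ) (1/2), ENNReal.ofReal ‖l r ^ 2 / r‖
      ≤ ENNReal.ofReal (2*π) *
        ∫⁻ r in Ioo (0:ℝ) (1/2), ∫⁻ t in S X₁ r, F g (ψ X₁ (r, t)) * ENNReal.ofReal r := hstep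
    _ ≤ ENNReal.ofReal (2*π) * volume (g '' Metric.ball (0:ℂ) 1) := by gcongr
    _ < ⊤ := ENNReal.mul_lt_top ENNReal.ofReal_lt_top harea
end

section
/- Let G be a finite connected graph with distinguished vertices t, b, and let R^eff denote the effective resistance between t and b (with unit conductances). Then R^eff equals the discrete extremal length: R^eff = max_W min_P (Σ_{e ∈ P} W_e)² / (Σ_{e ∈ E} W_e²), where the max is over all assignments W : E → [0,∞) not identically zero, and the min over all paths P from t to b. -/
open Finset

lemma sum_sym2 {V : Type*} [Fintype V] [DecidableEq V]
    (G : SimpleGraph V) [DecidableRel G.Adj] (F : Sym2 V → ℝ) :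
    ∑ u, ∑ v ∈ G.neighborFinset u, F s(u, v) = 2 * ∑ e ∈ G.edgeFinset, F e := by
  have hdart : ∑ d : G.Dart, F d.edge = ∑ u, ∑ v ∈ G.neighborFinset u, F s(u, v) := by
    rw [← Finset.sum_fiberwise_of_maps_to (g := fun d : G.Dart => d.fst)
      (t := (univ : Finset V)) (fun d _ => mem_univ _)]
    refine Finset.sum_congr rfl fun v _ => ?_
    have h1 := G.dart_fst_fiber v
    rw [show (univ.filter (fun d : G.Dart => d.fst = v)) = univ.image (G.dartOfNeighborSet v)
      from h1]
    rw [Finset.sum_image (fun a _ b _ hab => G.dartOfNeighborSet_injective v hab)]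
    rw [Finset.sum_subtype (G.neighborFinset v) (fun w => G.mem_neighborFinset v w)
      (fun w => F s(v, w))]
    rfl
  have hedge : ∑ d : G.Dart, F d.edge = 2 * ∑ e ∈ G.edgeFinset, F e := by
    rw [← Finset.sum_fiberwise_of_maps_to (g := fun d : G.Dart => d.edge)
      (t := G.edgeFinset) (fun d _ => by rw [SimpleGraph.mem_edgeFinset]; exact d.edge_mem)]
    rw [Finset.mul_sum]
    refine Finset.sum_congr rfl fun e he => ?_
    have step : ∑ d ∈ univ.filter (fun d : G.Dart => d.edge = e), F d.edge
        = ∑ _d ∈ univ.filter (fun d : G.Dart => d.edge = e), F e := by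
      refine Finset.sum_congr rfl fun d hd => ?_
      rw [Finset.mem_filter] at hd
      rw [hd.2]
    rw [step, Finset.sum_const]
    have hc := G.dart_edge_fiber_card e (SimpleGraph.mem_edgeFinset.mp he)
    rw [show (univ.filter (fun d : G.Dart => d.edge = e)).card = 2 from hc]
    simp [mul_comm]
  rw [← hdart, hedge]

lemma nbr_sum_ite {V : Type*} [Fintype V] [DecidableEq V]
    (G : SimpleGraph V) [DecidableRel G.Adj] (H : V → V → ℝ) (u : V) :
    ∑ v ∈ G.neighborFinset u, H u v = ∑ v, if G.Adj u v then H u v else 0 := by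
  rw [Finset.sum_ite, Finset.sum_const, smul_zero, add_zero]
  congr 1
  ext v
  simp [SimpleGraph.mem_neighborFinset]

lemma swap_sum {V : Type*} [Fintype V] [DecidableEq V]
    (G : SimpleGraph V) [DecidableRel G.Adj] (F : V → V → ℝ) :
    ∑ u, ∑ v ∈ G.neighborFinset u, F u v = ∑ u, ∑ v ∈ G.neighborFinset u, F v u := by
  calc ∑ u, ∑ v ∈ G.neighborFinset u, F u v
      = ∑ u, ∑ v, if G.Adj u v then F u v else 0 :=
        Finset.sum_congr rfl fun u _ => nbr_sum_ite G F u
    _ = ∑ v, ∑ u, if G.Adj u v then F u v else 0 := Finset.sum_comm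
    _ = ∑ v, ∑ u, if G.Adj v u then F u v else 0 := by
        refine Finset.sum_congr rfl fun v _ => Finset.sum_congr rfl fun u _ => ?_
        by_cases hadj : G.Adj u v
        · rw [if_pos hadj, if_pos hadj.symm]
        · rw [if_neg hadj, if_neg (fun hc => hadj hc.symm)]
    _ = ∑ u, ∑ v ∈ G.neighborFinset u, F v u :=
        (Finset.sum_congr rfl fun v _ => (nbr_sum_ite G (fun a c => F c a) v).symm)

lemma parts {V : Type*} [Fintype V] [DecidableEq V]
    (G : SimpleGraph V) [DecidableRel G.Adj] (f g : V → ℝ) :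
    ∑ u, ∑ v ∈ G.neighborFinset u, (f u - f v) * (g u - g v)
      = 2 * ∑ u, g u * ∑ v ∈ G.neighborFinset u, (f u - f v) := by
  have hswap : ∑ u, ∑ v ∈ G.neighborFinset u, (f u - f v) * g v
      = ∑ u, ∑ v ∈ G.neighborFinset u, (f v - f u) * g u :=
    swap_sum G (fun u v => (f u - f v) * g v)
  calc ∑ u, ∑ v ∈ G.neighborFinset u, (f u - f v) * (g u - g v)
      = (∑ u, ∑ v ∈ G.neighborFinset u, (f u - f v) * g u)
        - ∑ u, ∑ v ∈ G.neighborFinset u, (f u - f v) * g v := by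
        rw [← Finset.sum_sub_distrib]
        refine Finset.sum_congr rfl fun u _ => ?_
        rw [← Finset.sum_sub_distrib]
        refine Finset.sum_congr rfl fun v _ => by ring
    _ = (∑ u, ∑ v ∈ G.neighborFinset u, (f u - f v) * g u)
        + ∑ u, ∑ v ∈ G.neighborFinset u, (f u - f v) * g u := by
        rw [hswap]
        rw [show ∑ u, ∑ v ∈ G.neighborFinset u, (f v - f u) * g u
          = - ∑ u, ∑ v ∈ G.neighborFinset u, (f u - f v) * g u by
            rw [← Finset.sum_neg_distrib]
            refine Finset.sum_congr rfl fun u _ => ?_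
            rw [← Finset.sum_neg_distrib]
            exact Finset.sum_congr rfl fun v _ => by ring]
        ring
    _ = 2 * ∑ u, g u * ∑ v ∈ G.neighborFinset u, (f u - f v) := by
        rw [← two_mul]
        congr 1
        refine Finset.sum_congr rfl fun u _ => ?_
        rw [Finset.mul_sum]
        exact Finset.sum_congr rfl fun v _ => by ring

lemma spread_aux {V : Type*} (G : SimpleGraph V) (S : Set V) (b : V)
    (hS : ∀ x, x ∈ S → x ≠ b → ∀ y, G.Adj x y → y ∈ S) :
    ∀ {u v : V} (_ : G.Walk u v), u ∈ S → v ∈ S ∨ b ∈ S := by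
  intro u v p
  induction p with
  | nil => exact fun hu => Or.inl hu
  | @cons x y z ha p ih =>
    intro hx
    by_cases hxb : x = b
    · exact Or.inr (hxb ▸ hx)
    · exact ih (hS x hx hxb y ha)

lemma spread {V : Type*} (G : SimpleGraph V) (S : Set V) (b : V)
    (hS : ∀ x, x ∈ S → x ≠ b → ∀ y, G.Adj x y → y ∈ S) :
    ∀ {u : V} (_ : G.Walk u b), u ∈ S → b ∈ S := fun p hu =>
  (spread_aux G S b hS p hu).elim id id

lemma deg_pos {V : Type*} [Fintype V] [DecidableEq V]
    (G : SimpleGraph V) [DecidableRel G.Adj] (hconn : G.Connected)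
    (t b : V) (htb : t ≠ b) (u : V) : 0 < G.degree u := by
  rw [SimpleGraph.degree_pos_iff_exists_adj]
  have hw : ∃ w, w ≠ u := by
    by_cases h : u = t
    · exact ⟨b, fun hc => htb (h ▸ hc.symm)⟩
    · exact ⟨t, fun hc => h hc.symm⟩
  obtain ⟨w, hwu⟩ := hw
  obtain ⟨p⟩ := hconn u w
  cases p with
  | nil => exact absurd rfl hwu
  | cons ha _ => exact ⟨_, ha⟩

lemma spread_aux2 {V : Type*} (G : SimpleGraph V) (S : Set V) (b c : V)
    (hS : ∀ x, x ∈ S → x ≠ b → x ≠ c → ∀ y, G.Adj x y → y ∈ S) :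
    ∀ {u v : V} (_ : G.Walk u v), u ∈ S → v ∈ S ∨ b ∈ S ∨ c ∈ S := by
  intro u v p
  induction p with
  | nil => exact fun hu => Or.inl hu
  | @cons x y z ha p ih =>
    intro hx
    by_cases hxb : x = b
    · exact Or.inr (Or.inl (hxb ▸ hx))
    by_cases hxc : x = c
    · exact Or.inr (Or.inr (hxc ▸ hx))
    exact ih (hS x hx hxb hxc y ha)

section Harm
variable {V : Type*} [Fintype V] [DecidableEq V]
    (G : SimpleGraph V) [DecidableRel G.Adj] (hconn : G.Connected)
    (t b : V) (htb : t ≠ b)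
    (h : V → ℝ) (hht : h t = 1) (hhb : h b = 0)
    (hharm : ∀ u, u ≠ t → u ≠ b →
      h u = (1 / (G.degree u : ℝ)) * ∑ v ∈ G.neighborFinset u, h v)

include hconn htb hharm

lemma lap_zero (u : V) (hut : u ≠ t) (hub : u ≠ b) :
    ∑ v ∈ G.neighborFinset u, (h u - h v) = 0 := by
  have hd : (0 : ℝ) < (G.degree u : ℝ) := by
    exact_mod_cast deg_pos G hconn t b htb u
  have := hharm u hut hub
  rw [Finset.sum_sub_distrib, Finset.sum_const, SimpleGraph.card_neighborFinset_eq_degree]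
  rw [this]
  field_simp
  rw [nsmul_eq_mul, mul_div_assoc', mul_div_cancel_left₀ _ hd.ne', sub_self]

include hht hhb

lemma h_bounds (u : V) : 0 ≤ h u ∧ h u ≤ 1 := by
  constructor
  · -- min principle
    obtain ⟨m, _, hm⟩ := Finset.exists_min_image (univ : Finset V) h ⟨t, mem_univ t⟩
    have hmin : ∀ v, h m ≤ h v := fun v => hm v (mem_univ v)
    have key : h m = 0 := by
      set S : Set V := {v | h v = h m} with hSdef
      have hspread : ∀ x, x ∈ S → x ≠ b → x ≠ t → ∀ y, G.Adj x y → y ∈ S := by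
        intro x hx hxb hxt y hxy
        have hz := lap_zero G hconn t b htb h hharm x hxt hxb
        have hz' : ∑ v ∈ G.neighborFinset x, (h v - h x) = 0 := by
          rw [← neg_eq_zero, ← Finset.sum_neg_distrib]
          rw [← hz]
          exact Finset.sum_congr rfl fun v _ => by ring
        have hnn : ∀ v ∈ G.neighborFinset x, 0 ≤ h v - h x := by
          intro v _
          have : h x = h m := hx
          rw [this]
          linarith [hmin v]
        have := (Finset.sum_eq_zero_iff_of_nonneg hnn).mp hz' y
          (by rwa [SimpleGraph.mem_neighborFinset])
        have hx' : h x = h m := hx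
        show h y = h m
        linarith
      obtain ⟨p⟩ := hconn m b
      have hms : m ∈ S := rfl
      rcases spread_aux2 G S b t hspread p hms with hb' | hb' | ht'
      · have : h b = h m := hb'
        rw [hhb] at this; linarith
      · have : h b = h m := hb'
        rw [hhb] at this; linarith
      · have h1 : h t = h m := ht'
        rw [hht] at h1
        have := hmin b
        rw [hhb] at this
        linarith
    linarith [hmin u, key.symm ▸ hmin u, key]
  · -- max principle
    obtain ⟨m, _, hm⟩ := Finset.exists_max_image (univ : Finset V) h ⟨t, mem_univ t⟩
    have hmax : ∀ v, h v ≤ h m := fun v => hm v (mem_univ v)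
    have key : h m = 1 := by
      set S : Set V := {v | h v = h m} with hSdef
      have hspread : ∀ x, x ∈ S → x ≠ t → x ≠ b → ∀ y, G.Adj x y → y ∈ S := by
        intro x hx hxt hxb y hxy
        have hz := lap_zero G hconn t b htb h hharm x hxt hxb
        have hnn : ∀ v ∈ G.neighborFinset x, 0 ≤ h x - h v := by
          intro v _
          have hx' : h x = h m := hx
          rw [hx']
          linarith [hmax v]
        have := (Finset.sum_eq_zero_iff_of_nonneg hnn).mp hz y
          (by rwa [SimpleGraph.mem_neighborFinset])
        have hx' : h x = h m := hx
        show h y = h m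
        linarith
      obtain ⟨p⟩ := hconn m t
      have hms : m ∈ S := rfl
      rcases spread_aux2 G S t b hspread p hms with ht' | ht' | hb'
      · have : h t = h m := ht'
        rw [hht] at this; linarith
      · have : h t = h m := ht'
        rw [hht] at this; linarith
      · have h1 : h b = h m := hb'
        rw [hhb] at h1
        have := hmax t
        rw [hht] at this
        linarith
    linarith [hmax u]
end Harm
section Harm2
variable {V : Type*} [Fintype V] [DecidableEq V]
    (G : SimpleGraph V) [DecidableRel G.Adj] (hconn : G.Connected)
    (t b : V) (htb : t ≠ b)
    (h : V → ℝ) (hht : h t = 1) (hhb : h b = 0)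
    (hharm : ∀ u, u ≠ t → u ≠ b →
      h u = (1 / (G.degree u : ℝ)) * ∑ v ∈ G.neighborFinset u, h v)

include hconn htb hht hhb hharm

lemma I_pos : 0 < ∑ y ∈ G.neighborFinset t, (h t - h y) := by
  have hb1 : ∀ v, h v ≤ 1 := fun v => (h_bounds G hconn t b htb h hht hhb hharm v).2
  have hnn : ∀ y ∈ G.neighborFinset t, 0 ≤ h t - h y := fun y _ => by
    rw [hht]; linarith [hb1 y]
  rcases (Finset.sum_nonneg hnn).lt_or_eq with hlt | heq
  · exact hlt
  · exfalso
    have hall : ∀ y ∈ G.neighborFinset t, h t - h y = 0 :=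
      (Finset.sum_eq_zero_iff_of_nonneg hnn).mp heq.symm
    set M : Set V := {v | h v = 1} with hM
    have hspread : ∀ x, x ∈ M → x ≠ b → x ≠ b → ∀ y, G.Adj x y → y ∈ M := by
      intro x hx hxb _ y hxy
      by_cases hxt : x = t
      · subst hxt
        have := hall y (by rwa [SimpleGraph.mem_neighborFinset])
        show h y = 1
        rw [hht] at this; linarith
      · have hz := lap_zero G hconn t b htb h hharm x hxt hxb
        have hx1 : h x = 1 := hx
        have hnn2 : ∀ v ∈ G.neighborFinset x, 0 ≤ h x - h v := fun v _ => by
          rw [hx1]; linarith [hb1 v]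
        have := (Finset.sum_eq_zero_iff_of_nonneg hnn2).mp hz y
          (by rwa [SimpleGraph.mem_neighborFinset])
        show h y = 1
        linarith
    obtain ⟨p⟩ := hconn t b
    have : b ∈ M := by
      rcases spread_aux2 G M b b hspread p (show t ∈ M from hht) with hb' | hb' | hb' <;>
        exact hb'
    have : h b = 1 := this
    rw [hhb] at this
    norm_num at this

end Harm2

section Tele
variable {V : Type*} [Fintype V] [DecidableEq V]
    (G : SimpleGraph V) [DecidableRel G.Adj]
    (h : V → ℝ)

/-- the optimal weight -/
noncomputable def Wh (h : V → ℝ) : Sym2 V → ℝ :=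
  Sym2.lift ⟨fun x y => |h x - h y|, fun x y => by dsimp only; rw [abs_sub_comm]⟩

lemma Wh_mk (x y : V) : Wh h s(x, y) = |h x - h y| := rfl

lemma Wh_nonneg (e : Sym2 V) : 0 ≤ Wh h e := by
  induction e with
  | _ x y => exact abs_nonneg _

lemma tele {u v : V} (p : G.Walk u v) : |h u - h v| ≤ (p.edges.map (Wh h)).sum := by
  induction p with
  | nil => simp
  | @cons x y z ha p ih =>
    rw [SimpleGraph.Walk.edges_cons, List.map_cons, List.sum_cons, Wh_mk]
    calc |h x - h z| ≤ |h x - h y| + |h y - h z| := abs_sub_le _ _ _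
      _ ≤ |h x - h y| + (p.edges.map (Wh h)).sum := by linarith
end Tele

section Mono
variable {V : Type*} [Fintype V] [DecidableEq V]
    (G : SimpleGraph V) [DecidableRel G.Adj] (hconn : G.Connected)
    (t b : V) (htb : t ≠ b)
    (h : V → ℝ) (hht : h t = 1) (hhb : h b = 0)
    (hharm : ∀ u, u ≠ t → u ≠ b →
      h u = (1 / (G.degree u : ℝ)) * ∑ v ∈ G.neighborFinset u, h v)

include hconn htb hht hhb hharm

lemma mono_path_aux : ∀ n : ℕ, ∀ u : V,
    ((univ : Finset V).filter (fun v => h v < h u)).card ≤ n →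
    (u = b ∨ ∃ v ∈ G.neighborFinset u, h v < h u) →
    ∃ p : G.Walk u b, p.IsPath ∧ (p.edges.map (Wh h)).sum = h u ∧
      ∀ x ∈ p.support, h x ≤ h u := by
  have hb1 : ∀ v, h v ≤ 1 := fun v => (h_bounds G hconn t b htb h hht hhb hharm v).2
  intro n
  induction n with
  | zero =>
    intro u hcard hyp
    rcases hyp with rfl | ⟨v, hv, hlt⟩
    · refine ⟨SimpleGraph.Walk.nil, SimpleGraph.Walk.IsPath.nil, by simp [hhb], ?_⟩
      intro x hx
      simp at hx
      rw [hx]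
    · exfalso
      have : v ∈ (univ : Finset V).filter (fun v => h v < h u) := by
        simp [hlt]
      have := Finset.card_pos.mpr ⟨v, this⟩
      omega
  | succ n ih =>
    intro u hcard hyp
    rcases hyp with rfl | ⟨v, hv, hlt⟩
    · refine ⟨SimpleGraph.Walk.nil, SimpleGraph.Walk.IsPath.nil, by simp [hhb], ?_⟩
      intro x hx
      simp at hx
      rw [hx]
    · have hadj : G.Adj u v := (SimpleGraph.mem_neighborFinset _ _ _).mp hv
      -- v ≠ t
      have hvt : v ≠ t := by
        intro hc
        rw [hc, hht] at hlt
        linarith [hb1 u]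
      -- v = b or v has a strictly smaller neighbor
      have hyp' : v = b ∨ ∃ w ∈ G.neighborFinset v, h w < h v := by
        by_cases hvb : v = b
        · exact Or.inl hvb
        · right
          by_contra hno
          push_neg at hno
          have hz := lap_zero G hconn t b htb h hharm v hvt hvb
          have hnn2 : ∀ w ∈ G.neighborFinset v, 0 ≤ h w - h v := fun w hw => by
            linarith [hno w hw]
          have hz' : ∑ w ∈ G.neighborFinset v, (h w - h v) = 0 := by
            rw [← neg_eq_zero, ← Finset.sum_neg_distrib, ← hz]
            exact Finset.sum_congr rfl fun w _ => by ring
          have := (Finset.sum_eq_zero_iff_of_nonneg hnn2).mp hz' u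
            (by rwa [SimpleGraph.mem_neighborFinset, SimpleGraph.adj_comm])
          linarith
      -- card decreases
      have hsub : (univ : Finset V).filter (fun w => h w < h v)
          ⊂ (univ : Finset V).filter (fun w => h w < h u) := by
        refine Finset.ssubset_iff_of_subset ?_ |>.mpr ⟨v, by simp [hlt], by simp⟩
        intro w hw
        simp only [Finset.mem_filter, Finset.mem_univ, true_and] at hw ⊢
        linarith
      have hcard' : ((univ : Finset V).filter (fun w => h w < h v)).card ≤ n := by
        have := Finset.card_lt_card hsub
        omega
      obtain ⟨q, hqpath, hqsum, hqsupp⟩ := ih v hcard' hyp'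
      refine ⟨SimpleGraph.Walk.cons hadj q, ?_, ?_, ?_⟩
      · rw [SimpleGraph.Walk.cons_isPath_iff]
        refine ⟨hqpath, fun hc => ?_⟩
        have := hqsupp u hc
        linarith
      · rw [SimpleGraph.Walk.edges_cons, List.map_cons, List.sum_cons, Wh_mk, hqsum]
        rw [abs_of_nonneg (by linarith)]
        ring
      · intro x hx
        rw [SimpleGraph.Walk.support_cons] at hx
        rcases List.mem_cons.mp hx with rfl | hx'
        · exact le_rfl
        · linarith [hqsupp x hx']

end Mono
section Energy
variable {V : Type*} [Fintype V] [DecidableEq V]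
    (G : SimpleGraph V) [DecidableRel G.Adj] (hconn : G.Connected)
    (t b : V) (htb : t ≠ b)
    (h : V → ℝ) (hht : h t = 1) (hhb : h b = 0)
    (hharm : ∀ u, u ≠ t → u ≠ b →
      h u = (1 / (G.degree u : ℝ)) * ∑ v ∈ G.neighborFinset u, h v)

include hconn htb hht hhb hharm

lemma cross_zero (g : V → ℝ) (hgt : g t = 0) (hgb : g b = 0) :
    ∑ u, ∑ v ∈ G.neighborFinset u, (h u - h v) * (g u - g v) = 0 := by
  rw [parts]
  rw [Finset.sum_eq_zero]
  · ring
  intro u _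
  by_cases hut : u = t
  · rw [hut, hgt]; ring
  by_cases hub : u = b
  · rw [hub, hgb]; ring
  rw [lap_zero G hconn t b htb h hharm u hut hub]
  ring

lemma energy_eq : ∑ u, ∑ v ∈ G.neighborFinset u, (h u - h v) ^ 2
    = 2 * ∑ y ∈ G.neighborFinset t, (h t - h y) := by
  have hp := parts G h h
  rw [show ∑ u, ∑ v ∈ G.neighborFinset u, (h u - h v) ^ 2
      = ∑ u, ∑ v ∈ G.neighborFinset u, (h u - h v) * (h u - h v) by
    exact Finset.sum_congr rfl fun u _ => Finset.sum_congr rfl fun v _ => sq (h u - h v) ▸ by ring]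
  rw [hp]
  congr 1
  rw [Finset.sum_eq_single t]
  · rw [hht, one_mul]
  · intro u _ hut
    by_cases hub : u = b
    · rw [hub, hhb]; ring
    · rw [lap_zero G hconn t b htb h hharm u hut hub]; ring
  · intro hc
    exact absurd (Finset.mem_univ t) hc

lemma dirichlet (f : V → ℝ) (hft : f t = 1) (hfb : f b = 0) :
    2 * ∑ y ∈ G.neighborFinset t, (h t - h y)
      ≤ ∑ u, ∑ v ∈ G.neighborFinset u, (f u - f v) ^ 2 := by
  set g : V → ℝ := fun u => f u - h u with hg
  have hexp : ∑ u, ∑ v ∈ G.neighborFinset u, (f u - f v) ^ 2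
      = (∑ u, ∑ v ∈ G.neighborFinset u, (h u - h v) ^ 2)
        + 2 * (∑ u, ∑ v ∈ G.neighborFinset u, (h u - h v) * (g u - g v))
        + ∑ u, ∑ v ∈ G.neighborFinset u, (g u - g v) ^ 2 := by
    rw [Finset.mul_sum, ← Finset.sum_add_distrib, ← Finset.sum_add_distrib]
    refine Finset.sum_congr rfl fun u _ => ?_
    rw [Finset.mul_sum, ← Finset.sum_add_distrib, ← Finset.sum_add_distrib]
    refine Finset.sum_congr rfl fun v _ => ?_
    have : f u - f v = (h u - h v) + (g u - g v) := by simp [hg]; ring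
    rw [this]; ring
  rw [hexp, energy_eq G hconn t b htb h hht hhb hharm]
  rw [cross_zero G hconn t b htb h hht hhb hharm g (by simp [hg, hft, hht])
    (by simp [hg, hfb, hhb])]
  have : 0 ≤ ∑ u, ∑ v ∈ G.neighborFinset u, (g u - g v) ^ 2 :=
    Finset.sum_nonneg fun u _ => Finset.sum_nonneg fun v _ => sq_nonneg _
  linarith
end Energy
lemma toFinset_sum_le {α : Type*} [DecidableEq α] (W : α → ℝ) :
    ∀ (l : List α), (∀ a ∈ l, 0 ≤ W a) → ∑ a ∈ l.toFinset, W a ≤ (l.map W).sum := by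
  intro l
  induction l with
  | nil => simp
  | cons a l ih =>
    intro hnn
    rw [List.toFinset_cons, List.map_cons, List.sum_cons]
    by_cases hmem : a ∈ l.toFinset
    · rw [Finset.insert_eq_self.mpr hmem]
      have := ih (fun x hx => hnn x (List.mem_cons_of_mem a hx))
      have ha := hnn a List.mem_cons_self
      linarith
    · rw [Finset.sum_insert hmem]
      have := ih (fun x hx => hnn x (List.mem_cons_of_mem a hx))
      linarith

lemma sublist_sum_le {α : Type*} [DecidableEq α] (W : α → ℝ) (l m : List α)
    (hnodup : m.Nodup) (hsub : m ⊆ l) (hnn : ∀ a ∈ l, 0 ≤ W a) :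
    (m.map W).sum ≤ (l.map W).sum := by
  have h1 : (m.map W).sum = ∑ a ∈ m.toFinset, W a := by
    rw [List.sum_toFinset _ hnodup]
  rw [h1]
  calc ∑ a ∈ m.toFinset, W a ≤ ∑ a ∈ l.toFinset, W a := by
        refine Finset.sum_le_sum_of_subset_of_nonneg ?_ (fun a ha _ => ?_)
        · intro a ha
          rw [List.mem_toFinset] at ha ⊢
          exact hsub ha
        · exact hnn a (List.mem_toFinset.mp ha)
    _ ≤ (l.map W).sum := toFinset_sum_le W l hnn

lemma min_lip (a c L : ℝ) : |min a L - min c L| ≤ |a - c| := by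
  rcases le_total a L with h1 | h1 <;> rcases le_total c L with h2 | h2 <;>
    rcases abs_cases (a - c) with ⟨he, _⟩ | ⟨he, _⟩ <;>
    simp only [min_eq_left, min_eq_right, h1, h2] <;>
    rw [abs_le] <;> constructor <;> linarith
/-- Duffin's theorem: the effective resistance between `t` and `b` (unit conductances)
equals the discrete extremal length
`max_W min_P (Σ_{e∈P} W_e)² / (Σ_{e∈E} W_e²)`. -/
theorem stmt_14 {V : Type*} [Fintype V] [DecidableEq V]
    (G : SimpleGraph V) [DecidableRel G.Adj] (hconn : G.Connected)
    (t b : V) (htb : t ≠ b)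
    (h : V → ℝ) (hht : h t = 1) (hhb : h b = 0)
    (hharm : ∀ u, u ≠ t → u ≠ b →
      h u = (1 / (G.degree u : ℝ)) * ∑ v ∈ G.neighborFinset u, h v)
    (I : ℝ) (hI : I = ∑ y ∈ G.neighborFinset t, (h t - h y))
    (Reff : ℝ) (hReff : Reff = (h t - h b) / I) :
    Reff = sSup {x : ℝ | ∃ W : Sym2 V → ℝ,
      (∀ e, 0 ≤ W e) ∧ (∃ e ∈ G.edgeSet, W e ≠ 0) ∧
      x = sInf {y : ℝ | ∃ p : G.Walk t b, p.IsPath ∧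
        y = ((p.edges.map W).sum) ^ 2 / ∑ e ∈ G.edgeFinset, (W e) ^ 2}} := by
  have hIpos : 0 < I := hI ▸ I_pos G hconn t b htb h hht hhb hharm
  have hReff1 : Reff = 1 / I := by rw [hReff, hht, hhb]; ring_nf
  set S : Set ℝ := {x : ℝ | ∃ W : Sym2 V → ℝ,
      (∀ e, 0 ≤ W e) ∧ (∃ e ∈ G.edgeSet, W e ≠ 0) ∧
      x = sInf {y : ℝ | ∃ p : G.Walk t b, p.IsPath ∧
        y = ((p.edges.map W).sum) ^ 2 / ∑ e ∈ G.edgeFinset, (W e) ^ 2}} with hS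
  -- a neighbor of t with strictly smaller h-value
  have hnbr : ∃ y ∈ G.neighborFinset t, h y < h t := by
    by_contra hno
    push_neg at hno
    have : I ≤ 0 := by
      rw [hI]
      exact Finset.sum_nonpos fun y hy => by linarith [hno y hy]
    linarith
  -- ===== upper bound: every element of S is ≤ Reff =====
  have hub : ∀ x ∈ S, x ≤ Reff := by
    rintro x ⟨W, hWnn, ⟨e0, he0, hWe0⟩, hx⟩
    set D : ℝ := ∑ e ∈ G.edgeFinset, (W e) ^ 2 with hD
    have hDpos : 0 < D := by
      refine Finset.sum_pos' (fun e _ => sq_nonneg _) ⟨e0, SimpleGraph.mem_edgeFinset.mpr he0, ?_⟩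
      positivity
    set Su : V → Set ℝ := fun u => {y | ∃ p : G.Walk t u, y = (p.edges.map W).sum} with hSu
    have hSune : ∀ u, (Su u).Nonempty := by
      intro u
      obtain ⟨p⟩ := hconn t u
      exact ⟨_, p, rfl⟩
    have hSunn : ∀ u, ∀ y ∈ Su u, 0 ≤ y := by
      rintro u y ⟨p, rfl⟩
      refine List.sum_nonneg fun a ha => ?_
      obtain ⟨e, _, rfl⟩ := List.mem_map.mp ha
      exact hWnn e
    have hSubdd : ∀ u, BddBelow (Su u) := fun u => ⟨0, fun y hy => hSunn u y hy⟩
    set l : V → ℝ := fun u => sInf (Su u) with hl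
    have hl0 : ∀ u, 0 ≤ l u := fun u => Real.sInf_nonneg (hSunn u)
    have hlt : l t = 0 := by
      refine le_antisymm (csInf_le (hSubdd t) ⟨SimpleGraph.Walk.nil, by simp⟩) (hl0 t)
    have htri : ∀ u v, G.Adj u v → l v ≤ l u + W s(u, v) := by
      intro u v hadj
      have key : ∀ y ∈ Su u, l v ≤ y + W s(u, v) := by
        rintro y ⟨p, rfl⟩
        refine csInf_le (hSubdd v) ⟨p.concat hadj, ?_⟩
        simp [SimpleGraph.Walk.edges_concat]
      have : ∀ y ∈ Su u, l v - W s(u, v) ≤ y := fun y hy => by linarith [key y hy]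
      have := le_csInf (hSune u) this
      linarith
    have hlip : ∀ u v, G.Adj u v → |l u - l v| ≤ W s(u, v) := by
      intro u v hadj
      have h1 := htri u v hadj
      have h2 := htri v u hadj.symm
      rw [Sym2.eq_swap] at h2
      rw [abs_le]
      constructor <;> linarith
    set L : ℝ := l b with hL
    -- x ≤ L^2 / D
    have hx1 : x ≤ L ^ 2 / D := by
      refine le_of_forall_pos_le_add fun δ hδ => ?_
      have h2L : (0 : ℝ) < 2 * L + 1 := by linarith [hl0 b]
      set ε : ℝ := min 1 (δ * D / (2 * L + 1)) with hε
      have hεpos : 0 < ε := lt_min one_pos (by positivity)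
      obtain ⟨y, hymem, hylt⟩ := exists_lt_of_csInf_lt (hSune b)
        (show sInf (Su b) < L + ε from lt_add_of_pos_right _ hεpos)
      obtain ⟨p, rfl⟩ := hymem
      set q := p.bypass with hq
      set s : ℝ := (q.edges.map W).sum with hs
      have hsle : s ≤ (p.edges.map W).sum :=
        sublist_sum_le W p.edges q.edges p.bypass_isPath.edges_nodup
          p.edges_bypass_subset (fun a _ => hWnn a)
      have hs0 : 0 ≤ s := by
        refine List.sum_nonneg fun a ha => ?_
        obtain ⟨e, _, rfl⟩ := List.mem_map.mp ha
        exact hWnn e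
      have hxq : x ≤ s ^ 2 / D := by
        rw [hx]
        exact csInf_le ⟨0, by rintro z ⟨r, _, rfl⟩; positivity⟩ ⟨q, p.bypass_isPath, rfl⟩
      have hεle1 : ε ≤ 1 := min_le_left _ _
      have hεle2 : ε * (2 * L + 1) ≤ δ * D := by
        have := min_le_right (1:ℝ) (δ * D / (2 * L + 1))
        calc ε * (2 * L + 1) ≤ (δ * D / (2 * L + 1)) * (2 * L + 1) := by
              apply mul_le_mul_of_nonneg_right _ (le_of_lt h2L)
              exact this
          _ = δ * D := by field_simp
      have hslt : s < L + ε := lt_of_le_of_lt hsle hylt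
      have hsq : s ^ 2 ≤ L ^ 2 + δ * D := by nlinarith [hl0 b]
      calc x ≤ s ^ 2 / D := hxq
        _ ≤ (L ^ 2 + δ * D) / D := (div_le_div_iff_of_pos_right hDpos).mpr hsq
        _ = L ^ 2 / D + δ := by field_simp
    -- L^2 / D ≤ 1 / I
    have hx2 : L ^ 2 / D ≤ 1 / I := by
      rcases (hl0 b).eq_or_lt with hL0 | hLpos
      · have hL0' : L = 0 := hL0.symm
        rw [hL0']
        norm_num
        positivity
      · set f : V → ℝ := fun u => 1 - min (l u) L / L with hf
        have hft : f t = 1 := by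
          simp only [hf, hlt]
          rw [min_eq_left (hl0 b)]
          simp
        have hfb : f b = 0 := by
          simp only [hf, min_self]
          show 1 - min L L / L = 0
          rw [min_self, div_self (show L ≠ 0 from ne_of_gt hLpos), sub_self]
        have hdir := dirichlet G hconn t b htb h hht hhb hharm f hft hfb
        have hbound : ∑ u, ∑ v ∈ G.neighborFinset u, (f u - f v) ^ 2
            ≤ ∑ u, ∑ v ∈ G.neighborFinset u, (W s(u, v)) ^ 2 / L ^ 2 := by
          refine Finset.sum_le_sum fun u _ => Finset.sum_le_sum fun v hv => ?_
          have hadj : G.Adj u v := (SimpleGraph.mem_neighborFinset _ _ _).mp hv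
          have hdiff : f u - f v = (min (l v) L - min (l u) L) / L := by
            simp only [hf]
            ring
          have habs : |f u - f v| ≤ W s(u, v) / L := by
            rw [hdiff, abs_div, abs_of_pos hLpos]
            refine (div_le_div_iff_of_pos_right hLpos).mpr ?_
            calc |min (l v) L - min (l u) L| ≤ |l v - l u| := min_lip _ _ _
              _ = |l u - l v| := abs_sub_comm _ _
              _ ≤ W s(u, v) := hlip u v hadj
          calc (f u - f v) ^ 2 = |f u - f v| ^ 2 := (sq_abs _).symm
            _ ≤ (W s(u, v) / L) ^ 2 := by
                apply pow_le_pow_left₀ (abs_nonneg _) habs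
            _ = (W s(u, v)) ^ 2 / L ^ 2 := by rw [div_pow]
        have hsym := sum_sym2 G (fun e => (W e) ^ 2 / L ^ 2)
        rw [hsym] at hbound
        have hDdiv : ∑ e ∈ G.edgeFinset, (W e) ^ 2 / L ^ 2 = D / L ^ 2 := by
          rw [hD, Finset.sum_div]
        rw [hDdiv] at hbound
        rw [← hI] at hdir
        have hkey : I * L ^ 2 ≤ D := by
          have hIL : 2 * I ≤ 2 * (D / L ^ 2) := le_trans hdir hbound
          have : I ≤ D / L ^ 2 := by linarith
          calc I * L ^ 2 ≤ (D / L ^ 2) * L ^ 2 := by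
                apply mul_le_mul_of_nonneg_right this (sq_nonneg _)
            _ = D := by field_simp; exact div_self (show L ≠ 0 from ne_of_gt hLpos)
        rw [div_le_div_iff₀ hDpos hIpos]
        nlinarith
    rw [hReff1]
    exact le_trans hx1 hx2
  -- ===== membership: Reff ∈ S =====
  have hmem : Reff ∈ S := by
    refine ⟨Wh h, Wh_nonneg h, ?_, ?_⟩
    · obtain ⟨y0, hy0, hy0lt⟩ := hnbr
      have hadj : G.Adj t y0 := (SimpleGraph.mem_neighborFinset _ _ _).mp hy0
      refine ⟨s(t, y0), (SimpleGraph.mem_edgeSet G).mpr hadj, ?_⟩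
      rw [Wh_mk, abs_ne_zero]
      intro hc
      have := sub_eq_zero.mp hc
      rw [hht] at this
      linarith
    · -- Reff = sInf of the Y-set for Wh h
      have hDI : ∑ e ∈ G.edgeFinset, (Wh h e) ^ 2 = I := by
        have hsym := sum_sym2 G (fun e => (Wh h e) ^ 2)
        have hE := energy_eq G hconn t b htb h hht hhb hharm
        have heq : ∀ u : V, ∀ v ∈ G.neighborFinset u, (Wh h s(u, v)) ^ 2 = (h u - h v) ^ 2 := by
          intro u v _
          rw [Wh_mk, sq_abs]
        have : ∑ u, ∑ v ∈ G.neighborFinset u, (Wh h s(u, v)) ^ 2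
            = ∑ u, ∑ v ∈ G.neighborFinset u, (h u - h v) ^ 2 :=
          Finset.sum_congr rfl fun u _ => Finset.sum_congr rfl (heq u)
        rw [this, hE, ← hI] at hsym
        linarith
      obtain ⟨y0, hy0, hy0lt⟩ := hnbr
      obtain ⟨p, hppath, hpsum, _⟩ := mono_path_aux G hconn t b htb h hht hhb hharm
        (Fintype.card V) t (le_trans (Finset.card_filter_le _ _) (le_of_eq (Finset.card_univ)))
        (Or.inr ⟨y0, hy0, hy0lt⟩)
      have hlb : ∀ y ∈ {y : ℝ | ∃ p : G.Walk t b, p.IsPath ∧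
          y = ((p.edges.map (Wh h)).sum) ^ 2 / ∑ e ∈ G.edgeFinset, (Wh h e) ^ 2},
          1 / I ≤ y := by
        rintro y ⟨q, _, rfl⟩
        rw [hDI]
        have h1 : (1 : ℝ) ≤ (q.edges.map (Wh h)).sum := by
          have := tele G h q
          rw [hht, hhb] at this
          simpa using this
        have h2 : (1 : ℝ) ≤ ((q.edges.map (Wh h)).sum) ^ 2 := by nlinarith
        exact (div_le_div_iff_of_pos_right hIpos).mpr h2
      have hmem' : 1 / I ∈ {y : ℝ | ∃ p : G.Walk t b, p.IsPath ∧
          y = ((p.edges.map (Wh h)).sum) ^ 2 / ∑ e ∈ G.edgeFinset, (Wh h e) ^ 2} := by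
        refine ⟨p, hppath, ?_⟩
        rw [hDI, hpsum, hht]
        norm_num
      rw [hReff1]
      exact le_antisymm (le_csInf ⟨_, hmem'⟩ hlb) (csInf_le ⟨1 / I, hlb⟩ hmem')
  -- conclude
  exact le_antisymm (le_csSup ⟨Reff, fun x hx => hub x hx⟩ hmem) (csSup_le ⟨Reff, hmem⟩ hub)
end

section
/- Let h be a discrete harmonic function on the box D_n = {(x,y) ∈ ℤ² : |x| ≤ 2^n, |y| ≤ 2^n} (harmonic at all interior vertices). Then there is a universal constant C > 0, independent of n and h, such that the discrete partial derivatives of h at the origin satisfy |h(1,0) - h(0,0)| ≤ C‖h‖_∞ / 2^n and |h(0,1) - h(0,0)| ≤ C‖h‖_∞ / 2^n. -/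
set_option maxHeartbeats 1600000
open Real

lemma two_pow_le_exp (k : ℕ) : (2:ℝ)^k ≤ Real.exp k := by
  induction k with
  | zero => simp
  | succ k ih =>
    have h2 : (2:ℝ) ≤ Real.exp 1 := by
      have := Real.add_one_le_exp (1:ℝ); linarith
    have hc : ((k+1:ℕ):ℝ) = (k:ℝ) + 1 := by push_cast; ring
    rw [hc, Real.exp_add]
    calc (2:ℝ)^(k+1) = (2:ℝ)^k * 2 := by ring
    _ ≤ Real.exp k * Real.exp 1 :=
        mul_le_mul ih h2 (by norm_num) (Real.exp_nonneg _)

lemma cosh_le_one_add_sq {t : ℝ} (h0 : 0 ≤ t) (h1 : t ≤ 1) : Real.cosh t ≤ 1 + t^2 := by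
  have hb1 := Real.exp_bound (x := t) (by rw [abs_of_nonneg h0]; exact h1) (n := 3) (by norm_num)
  have hb2 := Real.exp_bound (x := -t) (by rw [abs_neg, abs_of_nonneg h0]; exact h1) (n := 3) (by norm_num)
  rw [abs_of_nonneg h0] at hb1
  rw [abs_neg, abs_of_nonneg h0] at hb2
  have hs1 : ∑ m ∈ Finset.range 3, t ^ m / m.factorial = 1 + t + t^2/2 := by
    norm_num [Finset.sum_range_succ, Nat.factorial]
  have hs2 : ∑ m ∈ Finset.range 3, (-t) ^ m / m.factorial = 1 - t + t^2/2 := by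
    norm_num [Finset.sum_range_succ, Nat.factorial]; ring
  rw [hs1] at hb1; rw [hs2] at hb2
  rw [Real.cosh_eq]
  have e1 := abs_sub_le_iff.1 hb1
  have e2 := abs_sub_le_iff.1 hb2
  have ht3 : t^3 ≤ t^2 := by nlinarith
  have : (3:ℕ).factorial = 6 := by norm_num [Nat.factorial]
  rw [this] at e1 e2
  push_cast at e1 e2
  nlinarith [e1.1, e2.1]

lemma cosh_le_exp_abs (t : ℝ) : Real.cosh t ≤ Real.exp |t| := by
  rw [Real.cosh_eq]
  have h1 : Real.exp t ≤ Real.exp |t| := Real.exp_le_exp.2 (le_abs_self t)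
  have h2 : Real.exp (-t) ≤ Real.exp |t| := Real.exp_le_exp.2 (neg_le_abs t)
  linarith

lemma exp_le_two_cosh {t : ℝ} : Real.exp t ≤ 2 * Real.cosh t := by
  rw [Real.cosh_eq]
  have := Real.exp_nonneg (-t)
  linarith

lemma cos_lb {z : ℝ} (hz : |z| ≤ 4/5) : (13/20:ℝ) ≤ Real.cos z := by
  have hb := Real.cos_bound (x := z) (by linarith)
  have h1 := abs_sub_le_iff.1 hb
  have h4 : |z|^4 ≤ (4/5)^4 := by
    apply pow_le_pow_left₀ (abs_nonneg z) hz 4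
  have h2 : z^2 ≤ (4/5)^2 := by
    rw [← sq_abs]; nlinarith [abs_nonneg z]
  nlinarith [h1.2]
lemma maxp (F : ℤ × ℤ → ℝ) (a Y : ℤ) (ha : a ≤ -1) (hY : 1 ≤ Y)
    (hbound : ∀ x y : ℤ, a ≤ x → x ≤ 0 → -Y ≤ y → y ≤ Y →
       (x = a ∨ y = -Y ∨ y = Y) → F (x, y) ≤ 0)
    (hharm : ∀ x y : ℤ, a < x → x < 0 → -Y < y → y < Y →
       4 * F (x, y) ≤ F (x+1, y) + F (x-1, y) + F (x, y+1) + F (x, y-1))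
    (hkill : ∀ y : ℤ, -Y < y → y < Y →
       5 * F (0, y) ≤ F (-1, y) + F (0, y+1) + F (0, y-1)) :
    ∀ x y : ℤ, a ≤ x → x ≤ 0 → -Y ≤ y → y ≤ Y → F (x, y) ≤ 0 := by
  classical
  set S : Finset (ℤ × ℤ) := Finset.Icc a 0 ×ˢ Finset.Icc (-Y) Y with hS
  have hmem : ∀ p : ℤ × ℤ, p ∈ S ↔ (a ≤ p.1 ∧ p.1 ≤ 0 ∧ -Y ≤ p.2 ∧ p.2 ≤ Y) := by
    intro p
    simp [hS, Finset.mem_product, Finset.mem_Icc, and_assoc]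
  have hne : S.Nonempty := ⟨(0,0), by rw [hmem]; refine ⟨by omega, le_refl _, by omega, by omega⟩⟩
  obtain ⟨p0, hp0S, hp0max⟩ := S.exists_max_image F hne
  set T : Finset (ℤ × ℤ) := S.filter (fun p => F p0 ≤ F p) with hT
  have hTne : T.Nonempty := ⟨p0, by simp [hT, hp0S]⟩
  obtain ⟨b, hbT, hbmin⟩ := T.exists_min_image Prod.fst hTne
  have hbS : b ∈ S := (Finset.mem_filter.1 hbT).1
  have hbmax : ∀ q ∈ S, F q ≤ F b := by
    intro q hq
    exact le_trans (hp0max q hq) (Finset.mem_filter.1 hbT).2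
  have hb := (hmem b).1 hbS
  obtain ⟨hb1, hb2, hb3, hb4⟩ := hb
  have hFb : F b ≤ 0 := by
    by_contra hpos
    push_neg at hpos
    rcases eq_or_lt_of_le hb1 with hxa | hxa
    · exact absurd (hbound b.1 b.2 hb1 hb2 hb3 hb4 (Or.inl hxa.symm)) (not_le.2 hpos)
    rcases eq_or_lt_of_le hb3 with hya | hya
    · exact absurd (hbound b.1 b.2 hb1 hb2 hb3 hb4 (Or.inr (Or.inl hya.symm))) (not_le.2 hpos)
    rcases eq_or_lt_of_le hb4 with hyb | hyb
    · exact absurd (hbound b.1 b.2 hb1 hb2 hb3 hb4 (Or.inr (Or.inr hyb))) (not_le.2 hpos)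
    have hin : ∀ u v : ℤ, a ≤ u → u ≤ 0 → -Y ≤ v → v ≤ Y → F (u, v) ≤ F b := by
      intro u v h1 h2 h3 h4
      exact hbmax (u, v) ((hmem (u,v)).2 ⟨h1, h2, h3, h4⟩)
    rcases eq_or_lt_of_le hb2 with hx0 | hx0
    · -- b.1 = 0 : killing
      have hk := hkill b.2 hya hyb
      have e1 : F (-1, b.2) ≤ F b := hin (-1) b.2 (by omega) (by omega) (by omega) (by omega)
      have e2 : F (0, b.2+1) ≤ F b := hin 0 (b.2+1) (by omega) (by omega) (by omega) (by omega)
      have e3 : F (0, b.2-1) ≤ F b := hin 0 (b.2-1) (by omega) (by omega) (by omega) (by omega)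
      have hb0 : F (0, b.2) = F b := by rw [← hx0]
      linarith
    · -- interior
      have hh := hharm b.1 b.2 hxa hx0 hya hyb
      have e1 : F (b.1+1, b.2) ≤ F b := hin _ _ (by omega) (by omega) (by omega) (by omega)
      have e2 : F (b.1, b.2+1) ≤ F b := hin _ _ (by omega) (by omega) (by omega) (by omega)
      have e3 : F (b.1, b.2-1) ≤ F b := hin _ _ (by omega) (by omega) (by omega) (by omega)
      have hbb : F (b.1, b.2) = F b := by rfl
      have e4 : F b ≤ F (b.1-1, b.2) := by linarith
      have hmemm : (b.1-1, b.2) ∈ T := by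
        rw [hT, Finset.mem_filter]
        refine ⟨(hmem _).2 ⟨by omega, by omega, by omega, by omega⟩, ?_⟩
        exact le_trans (Finset.mem_filter.1 hbT).2 e4
      have := hbmin _ hmemm
      simp at this
  intro x y h1 h2 h3 h4
  exact le_trans (hbmax (x,y) ((hmem (x,y)).2 ⟨h1, h2, h3, h4⟩)) hFb
lemma step (g : ℤ × ℤ → ℝ) (W W' Y Δ : ℤ) (K : ℝ)
    (hK : 0 ≤ K) (hW16 : 16 * W' ≤ W) (hW' : 1 ≤ W') (hY : 1 ≤ Y) (hΔ : 0 ≤ Δ)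
    (hodd : ∀ y : ℤ, g (1, y) = - g (0, y))
    (hharm : ∀ x y : ℤ, 1 - W < x → x ≤ 0 → -Y < y → y < Y →
        4 * g (x, y) = g (x+1, y) + g (x-1, y) + g (x, y+1) + g (x, y-1))
    (hbd : ∀ x y : ℤ, 1 - W ≤ x → x ≤ 0 → -Y ≤ y → y ≤ Y → |g (x, y)| ≤ K) :
    ∀ x y : ℤ, 1 - W' ≤ x → x ≤ 0 → |y| ≤ Y - Δ →
      |g (x, y)| ≤ K * (1/16) + 4 * K * Real.exp (-(Δ:ℝ)/(2*(W:ℝ))) := by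
  have hW : (16:ℤ) ≤ W := by omega
  set Wr : ℝ := (W:ℝ) with hWrdef
  have hWr : (16:ℝ) ≤ Wr := by rw [hWrdef]; exact_mod_cast hW
  set β : ℝ := 1/(2*Wr) with hβdef
  have hβ0 : 0 < β := by positivity
  have hβ1 : β ≤ 1/32 := by
    rw [hβdef]
    rw [div_le_div_iff₀ (by linarith) (by norm_num)]
    linarith
  have hch : Real.cosh β ≤ 1 + β^2 := cosh_le_one_add_sq hβ0.le (by linarith)
  have hch1 : 1 ≤ Real.cosh β := Real.one_le_cosh β
  have hrange1 : (-1:ℝ) ≤ 2 - Real.cosh β := by nlinarith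
  have hrange2 : 2 - Real.cosh β ≤ 1 := by linarith
  set γ : ℝ := Real.arccos (2 - Real.cosh β) with hγdef
  have hγ0 : 0 ≤ γ := Real.arccos_nonneg _
  have hcosγ : Real.cos γ = 2 - Real.cosh β := Real.cos_arccos hrange1 hrange2
  -- upper bound on γ
  have hγub : γ ≤ 4/(5*Wr) := by
    by_contra hcon
    push_neg at hcon
    have hlt : Real.cos γ < Real.cos (4/(5*Wr)) :=
      Real.cos_lt_cos_of_nonneg_of_le_pi (by positivity) (Real.arccos_le_pi _) hcon
    -- numeric: cos(4/(5Wr)) + cosh(1/(2Wr)) ≤ 2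
    have hu : 4/(5*Wr) ≤ 4/80 := by
      rw [div_le_div_iff₀ (by linarith) (by norm_num)]; linarith
    have hu0 : 0 < 4/(5*Wr) := by positivity
    have hcb := Real.cos_bound (x := 4/(5*Wr)) (by rw [abs_of_pos hu0]; linarith)
    have hcb1 := (abs_sub_le_iff.1 hcb).1
    have h4 : |4/(5*Wr)|^4 ≤ (4/80:ℝ)^4 := by
      apply pow_le_pow_left₀ (abs_nonneg _) (by rw [abs_of_pos hu0]; linarith) 4
    -- relation between β and u : β = 1/(2Wr), u = 4/(5Wr) : β = (5/8) * u
    have hβu : β = (5/8) * (4/(5*Wr)) := by rw [hβdef]; field_simp; ring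
    have hcc : Real.cosh β ≤ 1 + ((5/8) * (4/(5*Wr)))^2 := by rw [← hβu]; exact hch
    have habs : |4/(5*Wr)| = 4/(5*Wr) := abs_of_pos hu0
    rw [habs] at hcb1 h4
    rw [hcosγ] at hlt
    set u : ℝ := 4/(5*Wr)
    have hu2 : u^2 ≤ (4/80:ℝ)^2 := by nlinarith
    nlinarith
  have hπ : γ ≤ Real.pi := Real.arccos_le_pi _
  -- pointwise lower bound for the cosine factor
  have hcoslb : ∀ x : ℤ, 1 - W ≤ x → x ≤ 1 → (13/20:ℝ) ≤ Real.cos (γ*((x:ℝ)-1/2)) := by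
    intro x h1 h2
    apply cos_lb
    have hx1 : |(x:ℝ) - 1/2| ≤ Wr - 1/2 := by
      rw [abs_le]
      constructor
      · have h1' := (@Int.cast_le ℝ _ _ _).2 h1
        push_cast at h1'
        rw [hWrdef]; linarith
      · have h2' := (@Int.cast_le ℝ _ _ _).2 h2
        push_cast at h2'
        linarith
    rw [abs_mul, abs_of_nonneg hγ0]
    calc γ * |(x:ℝ)-1/2| ≤ (4/(5*Wr)) * Wr := by
          apply mul_le_mul hγub (by linarith) (abs_nonneg _) (by positivity)
    _ = 4/5 := by field_simp
  set cY : ℝ := Real.cosh (β*(Y:ℝ)) with hcYdef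
  have hcY : 0 < cY := by rw [hcYdef]; exact Real.cosh_pos _
  clear_value cY γ β Wr
  -- the barrier
  obtain ⟨w, hwdef⟩ : ∃ w : ℤ × ℤ → ℝ, w = fun p =>
      K * ((1/2 - (p.1:ℝ))/(Wr - 1/2))
      + 2*K*(Real.cos (γ*((p.1:ℝ)-1/2)) * Real.cosh (β*(p.2:ℝ)))/cY := ⟨_, rfl⟩
  have hden : (0:ℝ) < Wr - 1/2 := by linarith
  -- exact harmonicity of the barrier
  have hwharm : ∀ x y : ℤ, 4 * w (x, y)
      = w (x+1, y) + w (x-1, y) + w (x, y+1) + w (x, y-1) := by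
    intro x y
    have hA : Real.cos (γ*(((x:ℝ)+1)-1/2)) + Real.cos (γ*(((x:ℝ)-1)-1/2))
        = 2 * Real.cos (γ*((x:ℝ)-1/2)) * Real.cos γ := by
      have e1 : γ*(((x:ℝ)+1)-1/2) = γ*((x:ℝ)-1/2) + γ := by ring
      have e2 : γ*(((x:ℝ)-1)-1/2) = γ*((x:ℝ)-1/2) - γ := by ring
      rw [e1, e2, Real.cos_add, Real.cos_sub]; ring
    have hB : Real.cosh (β*((y:ℝ)+1)) + Real.cosh (β*((y:ℝ)-1))
        = 2 * Real.cosh (β*(y:ℝ)) * Real.cosh β := by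
      have e1 : β*((y:ℝ)+1) = β*(y:ℝ) + β := by ring
      have e2 : β*((y:ℝ)-1) = β*(y:ℝ) - β := by ring
      rw [e1, e2, Real.cosh_add, Real.cosh_sub]; ring
    simp only [hwdef]
    push_cast
    have h1 : K * ((1/2 - ((x:ℝ)+1))/(Wr-1/2)) + K * ((1/2 - ((x:ℝ)-1))/(Wr-1/2))
        + K * ((1/2 - (x:ℝ))/(Wr-1/2)) + K * ((1/2 - (x:ℝ))/(Wr-1/2))
        = 4 * (K * ((1/2 - (x:ℝ))/(Wr-1/2))) := by
      field_simp
      ring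
    have h2 : 2*K*(Real.cos (γ*(((x:ℝ)+1)-1/2)) * Real.cosh (β*(y:ℝ)))/cY
        + 2*K*(Real.cos (γ*(((x:ℝ)-1)-1/2)) * Real.cosh (β*(y:ℝ)))/cY
        + 2*K*(Real.cos (γ*((x:ℝ)-1/2)) * Real.cosh (β*((y:ℝ)+1)))/cY
        + 2*K*(Real.cos (γ*((x:ℝ)-1/2)) * Real.cosh (β*((y:ℝ)-1)))/cY
        = 4 * (2*K*(Real.cos (γ*((x:ℝ)-1/2)) * Real.cosh (β*(y:ℝ)))/cY) := by
      rw [← add_div, ← add_div, ← add_div,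
        show (4:ℝ) * (2*K*(Real.cos (γ*((x:ℝ)-1/2)) * Real.cosh (β*(y:ℝ)))/cY)
          = 4 * (2*K*(Real.cos (γ*((x:ℝ)-1/2)) * Real.cosh (β*(y:ℝ))))/cY by ring]
      congr 1
      linear_combination (2*K*Real.cosh (β*(y:ℝ)))*hA
        + (2*K*Real.cos (γ*((x:ℝ)-1/2)))*hB
        + (4*K*Real.cos (γ*((x:ℝ)-1/2))*Real.cosh (β*(y:ℝ)))*hcosγ
    linarith [h1, h2]
  -- kill inequality for the barrier
  have hwkill : ∀ y : ℤ, w (-1, y) + w (0, y+1) + w (0, y-1) ≤ 5 * w (0, y) := by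
    intro y
    have hh := hwharm 0 y
    norm_num at hh
    have e1 : Real.cos (γ*(((1:ℤ):ℝ)-1/2)) = Real.cos (γ*(((0:ℤ):ℝ)-1/2)) := by
      rw [show γ*(((0:ℤ):ℝ)-1/2) = -(γ*(((1:ℤ):ℝ)-1/2)) by push_cast; ring, Real.cos_neg]
    have hsum : w (1, y) + w (0, y)
        = 4*K*(Real.cos (γ*(((0:ℤ):ℝ)-1/2)) * Real.cosh (β*(y:ℝ)))/cY := by
      simp only [hwdef]
      rw [e1]
      push_cast
      field_simp
      ring
    have hpos : 0 ≤ w (1, y) + w (0, y) := by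
      rw [hsum]
      have hc := hcoslb 0 (by omega) (by omega)
      have hcb : (0:ℝ) < Real.cosh (β*(y:ℝ)) := Real.cosh_pos _
      have h0 : (0:ℝ) ≤ Real.cos (γ*(((0:ℤ):ℝ)-1/2)) := by linarith
      have hnum : 0 ≤ 4*K*(Real.cos (γ*(((0:ℤ):ℝ)-1/2)) * Real.cosh (β*(y:ℝ))) :=
        mul_nonneg (by linarith) (mul_nonneg h0 hcb.le)
      exact div_nonneg hnum hcY.le
    linarith
  -- upper estimate via the maximum principle
  have hub : ∀ x y : ℤ, 1-W ≤ x → x ≤ 0 → -Y ≤ y → y ≤ Y → g (x,y) - w (x,y) ≤ 0 := by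
    apply maxp (fun p => g p - w p) (1-W) Y (by omega) hY
    · intro x y h1 h2 h3 h4 hcase
      have hg := hbd x y h1 h2 h3 h4
      have hgle : g (x,y) ≤ K := (abs_le.1 hg).2
      have hcx := hcoslb x h1 (by omega)
      have hcb : (0:ℝ) < Real.cosh (β*(y:ℝ)) := Real.cosh_pos _
      have hp2nn : 0 ≤ 2*K*(Real.cos (γ*((x:ℝ)-1/2)) * Real.cosh (β*(y:ℝ)))/cY := by
        have h0 : (0:ℝ) ≤ Real.cos (γ*((x:ℝ)-1/2)) := by linarith
        have hnum : 0 ≤ 2*K*(Real.cos (γ*((x:ℝ)-1/2)) * Real.cosh (β*(y:ℝ))) :=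
          mul_nonneg (by linarith) (mul_nonneg h0 hcb.le)
        exact div_nonneg hnum hcY.le
      have hp1nn : 0 ≤ K * ((1/2 - (x:ℝ))/(Wr - 1/2)) := by
        apply mul_nonneg hK
        apply div_nonneg _ hden.le
        have h2' := (@Int.cast_le ℝ _ _ _).2 h2
        push_cast at h2'
        linarith
      rcases hcase with hxa | hy1 | hy2
      · have ex : (x:ℝ) = 1 - Wr := by
          rw [hxa, hWrdef]; push_cast; ring
        have e : K * ((1/2 - (x:ℝ))/(Wr-1/2)) = K := by
          rw [ex, show (1/2 - (1-Wr)) = Wr - 1/2 by ring, div_self (ne_of_gt hden), mul_one]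
        have hwge : K ≤ w (x,y) := by
          simp only [hwdef]
          linarith [hp2nn, e]
        linarith
      · have ey : Real.cosh (β*(y:ℝ)) = cY := by
          rw [hy1, hcYdef]; push_cast; rw [show β*(-(Y:ℝ)) = -(β*(Y:ℝ)) by ring, Real.cosh_neg]
        have hwge : K ≤ w (x,y) := by
          simp only [hwdef]
          rw [ey, show 2*K*(Real.cos (γ*((x:ℝ)-1/2)) * cY)/cY
              = 2*K*Real.cos (γ*((x:ℝ)-1/2)) * (cY/cY) by ring,
            div_self (ne_of_gt hcY), mul_one]
          nlinarith [hp1nn, hcx, hK]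
        linarith
      · have ey : Real.cosh (β*(y:ℝ)) = cY := by rw [hy2, hcYdef]
        have hwge : K ≤ w (x,y) := by
          simp only [hwdef]
          rw [ey, show 2*K*(Real.cos (γ*((x:ℝ)-1/2)) * cY)/cY
              = 2*K*Real.cos (γ*((x:ℝ)-1/2)) * (cY/cY) by ring,
            div_self (ne_of_gt hcY), mul_one]
          nlinarith [hp1nn, hcx, hK]
        linarith
    · intro x y h1 h2 h3 h4
      have hgh := hharm x y h1 (by omega) h3 h4
      have hwh := hwharm x y
      linarith
    · intro y h1 h2
      have hgh := hharm 0 y (by omega) (by omega) h1 h2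
      norm_num at hgh
      have ho := hodd y
      have hwk := hwkill y
      linarith
  have hlb : ∀ x y : ℤ, 1-W ≤ x → x ≤ 0 → -Y ≤ y → y ≤ Y → (-g (x,y)) - w (x,y) ≤ 0 := by
    apply maxp (fun p => -g p - w p) (1-W) Y (by omega) hY
    · intro x y h1 h2 h3 h4 hcase
      have hg := hbd x y h1 h2 h3 h4
      have hgle : -g (x,y) ≤ K := by
        have := (abs_le.1 hg).1; linarith
      have hcx := hcoslb x h1 (by omega)
      have hcb : (0:ℝ) < Real.cosh (β*(y:ℝ)) := Real.cosh_pos _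
      have hp2nn : 0 ≤ 2*K*(Real.cos (γ*((x:ℝ)-1/2)) * Real.cosh (β*(y:ℝ)))/cY := by
        have h0 : (0:ℝ) ≤ Real.cos (γ*((x:ℝ)-1/2)) := by linarith
        have hnum : 0 ≤ 2*K*(Real.cos (γ*((x:ℝ)-1/2)) * Real.cosh (β*(y:ℝ))) :=
          mul_nonneg (by linarith) (mul_nonneg h0 hcb.le)
        exact div_nonneg hnum hcY.le
      have hp1nn : 0 ≤ K * ((1/2 - (x:ℝ))/(Wr - 1/2)) := by
        apply mul_nonneg hK
        apply div_nonneg _ hden.le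
        have h2' := (@Int.cast_le ℝ _ _ _).2 h2
        push_cast at h2'
        linarith
      rcases hcase with hxa | hy1 | hy2
      · have ex : (x:ℝ) = 1 - Wr := by
          rw [hxa, hWrdef]; push_cast; ring
        have e : K * ((1/2 - (x:ℝ))/(Wr-1/2)) = K := by
          rw [ex, show (1/2 - (1-Wr)) = Wr - 1/2 by ring, div_self (ne_of_gt hden), mul_one]
        have hwge : K ≤ w (x,y) := by
          simp only [hwdef]
          linarith [hp2nn, e]
        linarith
      · have ey : Real.cosh (β*(y:ℝ)) = cY := by
          rw [hy1, hcYdef]; push_cast; rw [show β*(-(Y:ℝ)) = -(β*(Y:ℝ)) by ring, Real.cosh_neg]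
        have hwge : K ≤ w (x,y) := by
          simp only [hwdef]
          rw [ey, show 2*K*(Real.cos (γ*((x:ℝ)-1/2)) * cY)/cY
              = 2*K*Real.cos (γ*((x:ℝ)-1/2)) * (cY/cY) by ring,
            div_self (ne_of_gt hcY), mul_one]
          nlinarith [hp1nn, hcx, hK]
        linarith
      · have ey : Real.cosh (β*(y:ℝ)) = cY := by rw [hy2, hcYdef]
        have hwge : K ≤ w (x,y) := by
          simp only [hwdef]
          rw [ey, show 2*K*(Real.cos (γ*((x:ℝ)-1/2)) * cY)/cY
              = 2*K*Real.cos (γ*((x:ℝ)-1/2)) * (cY/cY) by ring,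
            div_self (ne_of_gt hcY), mul_one]
          nlinarith [hp1nn, hcx, hK]
        linarith
    · intro x y h1 h2 h3 h4
      have hgh := hharm x y h1 (by omega) h3 h4
      have hwh := hwharm x y
      linarith
    · intro y h1 h2
      have hgh := hharm 0 y (by omega) (by omega) h1 h2
      norm_num at hgh
      have ho := hodd y
      have hwk := hwkill y
      linarith
  -- final evaluation of the barrier on the smaller region
  intro x y hx1 hx2 hy
  have hyabs := abs_le.1 hy
  have hx1' : 1 - W ≤ x := by omega
  have hyl : -Y ≤ y := by omega
  have hyr : y ≤ Y := by omega
  have h1 := hub x y hx1' hx2 hyl hyr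
  have h2 := hlb x y hx1' hx2 hyl hyr
  have habs : |g (x,y)| ≤ w (x,y) := abs_le.2 ⟨by linarith, by linarith⟩
  have hwle : w (x,y) ≤ K*(1/16) + 4*K*Real.exp (-(Δ:ℝ)/(2*Wr)) := by
    have hx1r := (@Int.cast_le ℝ _ _ _).2 hx1
    have hW16r := (@Int.cast_le ℝ _ _ _).2 hW16
    push_cast at hx1r hW16r
    have hp1 : K * ((1/2 - (x:ℝ))/(Wr - 1/2)) ≤ K*(1/16) := by
      apply mul_le_mul_of_nonneg_left _ hK
      rw [div_le_iff₀ hden]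
      rw [hWrdef]
      linarith
    have hcy2 : Real.cosh (β*(y:ℝ)) ≤ Real.exp (β*((Y:ℝ)-(Δ:ℝ))) := by
      refine le_trans (cosh_le_exp_abs _) (Real.exp_le_exp.2 ?_)
      rw [abs_mul, abs_of_pos hβ0]
      have hyc := (@Int.cast_le ℝ _ _ _).2 hy
      push_cast at hyc
      have : |(y:ℝ)| ≤ (Y:ℝ) - (Δ:ℝ) := by linarith
      nlinarith [hβ0.le]
    have hq : Real.exp (β*((Y:ℝ)-(Δ:ℝ))) ≤ (2*Real.exp (-(β*(Δ:ℝ)))) * cY := by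
      have h2b : Real.exp (β*(Y:ℝ)) ≤ 2*cY := by rw [hcYdef]; exact exp_le_two_cosh
      calc Real.exp (β*((Y:ℝ)-(Δ:ℝ)))
          = Real.exp (-(β*(Δ:ℝ))) * Real.exp (β*(Y:ℝ)) := by
            rw [← Real.exp_add]; ring_nf
      _ ≤ Real.exp (-(β*(Δ:ℝ))) * (2*cY) :=
            mul_le_mul_of_nonneg_left h2b (Real.exp_nonneg _)
      _ = (2*Real.exp (-(β*(Δ:ℝ)))) * cY := by ring
    have hp2 : 2*K*(Real.cos (γ*((x:ℝ)-1/2)) * Real.cosh (β*(y:ℝ)))/cY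
        ≤ 4*K*Real.exp (-(β*(Δ:ℝ))) := by
      rw [div_le_iff₀ hcY]
      have hcb : (0:ℝ) < Real.cosh (β*(y:ℝ)) := Real.cosh_pos _
      have s1 : 2*K*(Real.cos (γ*((x:ℝ)-1/2)) * Real.cosh (β*(y:ℝ)))
          ≤ 2*K*Real.cosh (β*(y:ℝ)) := by
        nlinarith [mul_nonneg (mul_nonneg hK hcb.le)
          (sub_nonneg.2 (Real.cos_le_one (γ*((x:ℝ)-1/2))))]
      have s2 : 2*K*Real.cosh (β*(y:ℝ)) ≤ 2*K*Real.exp (β*((Y:ℝ)-(Δ:ℝ))) := by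
        nlinarith [hcy2, hK]
      have s3 : 2*K*Real.exp (β*((Y:ℝ)-(Δ:ℝ))) ≤ 2*K*((2*Real.exp (-(β*(Δ:ℝ))))*cY) := by
        nlinarith [hq, hK]
      nlinarith [s1, s2, s3]
    have hrw : -(β*(Δ:ℝ)) = -(Δ:ℝ)/(2*Wr) := by
      rw [hβdef]; ring
    rw [← hrw]
    simp only [hwdef]
    linarith [hp1, hp2]
  calc |g (x,y)| ≤ w (x,y) := habs
  _ ≤ K*(1/16) + 4*K*Real.exp (-(Δ:ℝ)/(2*Wr)) := hwle
lemma int_succ_le_two_pow (j : ℕ) : (j:ℤ) + 1 ≤ 2^j := by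
  induction j with
  | zero => norm_num
  | succ j ih =>
    have : (0:ℤ) < 2^j := pow_pos (by norm_num) _
    push_cast
    calc (j:ℤ) + 1 + 1 ≤ 2^j + 2^j := by linarith
    _ = 2^(j+1) := by ring

lemma grad (n : ℕ) (h : ℤ × ℤ → ℝ) (M : ℝ)
    (hbd : ∀ p : ℤ × ℤ, |p.1| ≤ 2^n → |p.2| ≤ 2^n → |h p| ≤ M)
    (hharm : ∀ p : ℤ × ℤ, |p.1| < 2^n → |p.2| < 2^n →
      4 * h p = h (p.1+1, p.2) + h (p.1-1, p.2) + h (p.1, p.2+1) + h (p.1, p.2-1)) :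
    |h (1,0) - h (0,0)| ≤ 4096 * M / 2^n := by
  have hM : 0 ≤ M := le_trans (abs_nonneg _) (hbd (0,0) (by norm_num) (by norm_num))
  have h2p : (0:ℝ) < 2^n := by positivity
  have h1n : (1:ℤ) ≤ 2^n := by
    have := pow_pos (show (0:ℤ) < 2 by norm_num) n
    omega
  by_cases hn : n < 12
  · have hb1 := hbd (1,0) (by simpa using h1n) (by norm_num)
    have hb0 := hbd (0,0) (by norm_num) (by norm_num)
    have habs : |h (1,0) - h (0,0)| ≤ 2*M := by
      calc |h (1,0) - h (0,0)| ≤ |h (1,0)| + |h (0,0)| := abs_sub _ _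
      _ ≤ 2*M := by linarith
    have hpow : (2:ℝ)^n ≤ 2048 := by
      calc (2:ℝ)^n ≤ 2^11 := by
            apply pow_le_pow_right₀ (by norm_num)
            omega
      _ = 2048 := by norm_num
    rw [le_div_iff₀ h2p]
    nlinarith
  · push_neg at hn
    obtain ⟨g, hgdef⟩ : ∃ g : ℤ × ℤ → ℝ, g = fun p => h p - h (1 - p.1, p.2) := ⟨_, rfl⟩
    set m : ℕ := (n-5)/4 with hmdef
    have hm1 : 4*m + 5 ≤ n := by omega
    have hm2 : n ≤ 4*m + 8 := by omega
    obtain ⟨W, hWdef⟩ : ∃ W : ℕ → ℤ, W = fun j => (2:ℤ)^(n-5-4*j) := ⟨_, rfl⟩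
    obtain ⟨D, hDdef⟩ : ∃ D : ℕ → ℤ, D = fun j => 2*(W j)*(6+(j:ℤ)) := ⟨_, rfl⟩
    obtain ⟨Yy, hYdef⟩ : ∃ Yy : ℕ → ℤ, Yy = fun j => 2^n - ∑ i ∈ Finset.range j, D i := ⟨_, rfl⟩
    obtain ⟨Kk, hKdef⟩ : ∃ Kk : ℕ → ℝ,
        Kk = fun j => 2*M*∏ i ∈ Finset.range j, (1/16 + (1/16)*(1/2:ℝ)^i) := ⟨_, rfl⟩
    have hWpos : ∀ j, 1 ≤ W j := by
      intro j; simp only [hWdef]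
      have := pow_pos (show (0:ℤ) < 2 by norm_num) (n-5-4*j)
      omega
    have hWle : ∀ j, W j ≤ 2^(n-5) := by
      intro j; simp only [hWdef]
      apply pow_le_pow_right₀ (by norm_num)
      omega
    have hsmall : (32:ℤ)*2^(n-5) = 2^n := by
      have e : (2:ℤ)^n = 2^(n-5)*2^5 := by rw [← pow_add]; congr 1; omega
      rw [e]; ring
    have hKpos : ∀ j, 0 ≤ Kk j := by
      intro j; simp only [hKdef]
      apply mul_nonneg (by linarith)
      apply Finset.prod_nonneg
      intro i _
      positivity
    have hDpos : ∀ j, 0 ≤ D j := by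
      intro j; simp only [hDdef]
      have := hWpos j
      positivity
    have hYub : ∀ j, Yy j ≤ 2^n := by
      intro j; simp only [hYdef]
      have : (0:ℤ) ≤ ∑ i ∈ Finset.range j, D i :=
        Finset.sum_nonneg (fun i _ => hDpos i)
      omega
    have hYlb : ∀ j, j ≤ m → 2^(n-2) + 2^(n-1-3*j) ≤ Yy j := by
      intro j
      induction j with
      | zero =>
        intro _
        have hY0 : Yy 0 = 2^n := by simp [hYdef]
        rw [hY0]
        have e1 : (2:ℤ)^n = 4*2^(n-2) := by
          have e : (2:ℤ)^n = 2^(n-2)*2^2 := by rw [← pow_add]; congr 1; omega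
          rw [e]; ring
        have e2 : (2:ℤ)^(n-1-3*0) = 2*2^(n-2) := by
          have e : (2:ℤ)^(n-1-3*0) = 2^(n-2)*2^1 := by rw [← pow_add]; congr 1; omega
          rw [e]; ring
        have : (0:ℤ) < 2^(n-2) := pow_pos (by norm_num) _
        omega
      | succ j ih =>
        intro hj
        have hj' : j ≤ m := by omega
        have ihj := ih hj'
        have eY : Yy (j+1) = Yy j - D j := by
          simp only [hYdef]
          rw [Finset.sum_range_succ]; ring
        have hkey : D j ≤ 2^(n-1-3*j) - 2^(n-1-3*(j+1)) := by
          have ha : (0:ℤ) < 2^(n-5-4*j) := pow_pos (by norm_num) _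
          have e1 : (2:ℤ)^(n-1-3*j) = 2^(n-5-4*j) * (16*2^j) := by
            have e : (2:ℤ)^(n-1-3*j) = 2^(n-5-4*j)*2^(4+j) := by
              rw [← pow_add]; congr 1; omega
            rw [e, pow_add]; ring
          have e2 : (2:ℤ)^(n-1-3*(j+1)) = 2^(n-5-4*j) * (2*2^j) := by
            have e : (2:ℤ)^(n-1-3*(j+1)) = 2^(n-5-4*j)*2^(1+j) := by
              rw [← pow_add]; congr 1; omega
            rw [e, pow_add]; ring
          have hb := int_succ_le_two_pow j
          have hmul : 2*(6+(j:ℤ)) ≤ 14*2^j := by linarith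
          have hprod := mul_le_mul_of_nonneg_left hmul ha.le
          simp only [hDdef, hWdef]
          rw [e1, e2]
          nlinarith
        rw [eY]
        have e3 : (2:ℤ)^(n-1-3*(j+1)) ≤ 2^(n-1-3*j) := by
          apply pow_le_pow_right₀ (by norm_num); omega
        omega
    have hY1 : ∀ j, j ≤ m → 1 ≤ Yy j := by
      intro j hj
      have := hYlb j hj
      have h1 : (0:ℤ) < 2^(n-2) := pow_pos (by norm_num) _
      have h2 : (0:ℤ) < 2^(n-1-3*j) := pow_pos (by norm_num) _
      omega
    have hgodd : ∀ y : ℤ, g (1, y) = - g (0, y) := by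
      intro y; simp only [hgdef]
      norm_num
    have hgh : ∀ x y : ℤ, -(2^(n-5)) ≤ x → x ≤ 0 → -(2^n) < y → y < 2^n →
        4 * g (x, y) = g (x+1, y) + g (x-1, y) + g (x, y+1) + g (x, y-1) := by
      intro x y hx1 hx2 hy1 hy2
      have hxb : |x| < 2^n := by
        rw [abs_lt]
        constructor <;> omega
      have hxb2 : |1 - x| < 2^n := by
        rw [abs_lt]
        constructor <;> omega
      have hyb : |y| < 2^n := by rw [abs_lt]; exact ⟨hy1, hy2⟩
      have hh1 := hharm (x, y) hxb hyb
      have hh2 := hharm (1-x, y) hxb2 hyb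
      simp only at hh1 hh2
      simp only [hgdef]
      rw [show (1:ℤ) - (x+1) = (1-x)-1 by ring, show (1:ℤ) - (x-1) = (1-x)+1 by ring]
      linarith
    have main : ∀ j, j ≤ m → ∀ x y : ℤ, 1 - W j ≤ x → x ≤ 0 → |y| ≤ Yy j →
        |g (x, y)| ≤ Kk j := by
      intro j
      induction j with
      | zero =>
        intro _ x y hx1 hx2 hy
        have hW0 : W 0 = 2^(n-5) := by simp [hWdef]
        rw [hW0] at hx1
        have hyabs := abs_le.1 hy
        have hY0 : Yy 0 = 2^n := by simp [hYdef]
        rw [hY0] at hyabs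
        have hK0 : Kk 0 = 2*M := by simp [hKdef]
        rw [hK0]
        simp only [hgdef]
        have hppos := pow_pos (show (0:ℤ) < 2 by norm_num) (n-5)
        have hb1 : |h (x, y)| ≤ M := by
          apply hbd (x,y)
          · simp only
            rw [abs_le]
            constructor <;> omega
          · simp only
            rw [abs_le]
            constructor <;> omega
        have hb2 : |h (1-x, y)| ≤ M := by
          apply hbd (1-x, y)
          · simp only
            rw [abs_le]
            constructor <;> omega
          · simp only
            rw [abs_le]
            constructor <;> omega
        calc |h (x,y) - h (1-x, y)| ≤ |h (x,y)| + |h (1-x,y)| := abs_sub _ _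
        _ ≤ 2*M := by linarith
      | succ j ih =>
        intro hj
        have hj' : j ≤ m := by omega
        have IH := ih hj'
        have hWeq : 16 * W (j+1) ≤ W j := by
          simp only [hWdef]
          have e : (2:ℤ)^(n-5-4*j) = 2^(n-5-4*(j+1))*2^4 := by
            rw [← pow_add]; congr 1; omega
          rw [e]; ring_nf
          omega
        have hstep := step g (W j) (W (j+1)) (Yy j) (D j) (Kk j)
          (hKpos j) hWeq (hWpos (j+1)) (hY1 j hj') (hDpos j)
          hgodd
          (by
            intro x y hx1 hx2 hy1 hy2
            apply hgh x y _ hx2 _ _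
            · have := hWle j; omega
            · have := hYub j; omega
            · have := hYub j; omega)
          (by
            intro x y hx1 hx2 hy1 hy2
            exact IH x y hx1 hx2 (abs_le.2 ⟨hy1, hy2⟩))
        intro x y hx1 hx2 hy
        have eY : Yy (j+1) = Yy j - D j := by
          simp only [hYdef]
          rw [Finset.sum_range_succ]; ring
        rw [eY] at hy
        have hres := hstep x y hx1 hx2 hy
        have hWr0 : (0:ℝ) < ((W j:ℤ):ℝ) := by
          have := hWpos j
          exact_mod_cast (by omega : (0:ℤ) < W j)
        have eexp : -((D j:ℤ):ℝ)/(2*((W j:ℤ):ℝ)) = -((6:ℝ)+j) := by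
          simp only [hDdef]
          push_cast
          field_simp
        rw [eexp] at hres
        have hkey : 4*Real.exp (-((6:ℝ)+j)) ≤ (1/16)*(1/2:ℝ)^j := by
          have he : (0:ℝ) < Real.exp ((6:ℝ)+j) := Real.exp_pos _
          rw [Real.exp_neg,
            show (4:ℝ)*(Real.exp ((6:ℝ)+j))⁻¹ = 4/Real.exp ((6:ℝ)+j) by ring,
            div_le_iff₀ he]
          have h2e := two_pow_le_exp (6+j)
          push_cast at h2e
          have hb : ((1:ℝ)/2)^j * (2:ℝ)^j = 1 := by
            rw [← mul_pow]; norm_num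
          have ha : ((1:ℝ)/2)^j * (2:ℝ)^(6+j) = 64 := by
            rw [pow_add]; linear_combination (64:ℝ)*hb
          have hc : (0:ℝ) ≤ ((1:ℝ)/2)^j := by positivity
          have hd := mul_le_mul_of_nonneg_left h2e hc
          rw [ha] at hd
          nlinarith [hd]
        have hKstep : Kk (j+1) = Kk j * (1/16 + (1/16)*(1/2:ℝ)^j) := by
          simp only [hKdef]
          rw [Finset.prod_range_succ]; ring
        have hfin : Kk j * (1/16) + 4 * Kk j * Real.exp (-((6:ℝ)+j)) ≤ Kk (j+1) := by
          rw [hKstep]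
          nlinarith [mul_le_mul_of_nonneg_left hkey (hKpos j)]
        linarith
    have h00 : |g (0,0)| ≤ Kk m := by
      apply main m le_rfl 0 0
      · have := hWpos m; omega
      · omega
      · simp only [abs_zero]
        have := hY1 m le_rfl
        omega
    have hKbound : ∀ j, Kk j ≤ 2*M*(1/16:ℝ)^j * Real.exp (2 - 2*(1/2:ℝ)^j) := by
      intro j
      induction j with
      | zero =>
        have hK0 : Kk 0 = 2*M := by simp [hKdef]
        rw [hK0]
        norm_num
      | succ j ih =>
        have hKstep : Kk (j+1) = Kk j * (1/16 + (1/16)*(1/2:ℝ)^j) := by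
          simp only [hKdef]
          rw [Finset.prod_range_succ]; ring
        have hfac : (0:ℝ) ≤ 1/16 + (1/16)*(1/2:ℝ)^j := by positivity
        have e1 : Real.exp (2 - 2*(1/2:ℝ)^(j+1))
            = Real.exp (2 - 2*(1/2:ℝ)^j) * Real.exp ((1/2:ℝ)^j) := by
          rw [← Real.exp_add]
          congr 1
          rw [pow_succ]; ring
        have e2 : 1 + (1/2:ℝ)^j ≤ Real.exp ((1/2:ℝ)^j) := by
          have := Real.add_one_le_exp ((1/2:ℝ)^j); linarith
        rw [hKstep]
        calc Kk j * (1/16 + (1/16)*(1/2:ℝ)^j)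
            ≤ (2*M*(1/16:ℝ)^j * Real.exp (2 - 2*(1/2:ℝ)^j)) * (1/16 + (1/16)*(1/2:ℝ)^j) :=
              mul_le_mul_of_nonneg_right ih hfac
        _ = (2*M*(1/16:ℝ)^(j+1)) * (Real.exp (2 - 2*(1/2:ℝ)^j) * (1 + (1/2:ℝ)^j)) := by
              rw [pow_succ]; ring
        _ ≤ (2*M*(1/16:ℝ)^(j+1)) * (Real.exp (2 - 2*(1/2:ℝ)^j) * Real.exp ((1/2:ℝ)^j)) := by
              apply mul_le_mul_of_nonneg_left _ (by positivity)
              exact mul_le_mul_of_nonneg_left e2 (Real.exp_nonneg _)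
        _ = 2*M*(1/16:ℝ)^(j+1) * Real.exp (2 - 2*(1/2:ℝ)^(j+1)) := by rw [e1]
    have hexp2 : Real.exp 2 ≤ 8 := by
      have h1 := Real.exp_one_lt_d9
      have he : Real.exp 2 = Real.exp 1 * Real.exp 1 := by
        rw [← Real.exp_add]; norm_num
      nlinarith [Real.exp_pos 1, h1, mul_lt_mul_of_pos_left h1 (Real.exp_pos 1)]
    have hKm : Kk m ≤ 16*M*(1/16:ℝ)^m := by
      have hmono : Real.exp (2 - 2*(1/2:ℝ)^m) ≤ 8 := by
        refine le_trans (Real.exp_le_exp.2 ?_) hexp2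
        have : (0:ℝ) ≤ (1/2:ℝ)^m := by positivity
        linarith
      have hpos : (0:ℝ) ≤ 2*M*(1/16:ℝ)^m := by positivity
      calc Kk m ≤ 2*M*(1/16:ℝ)^m * Real.exp (2 - 2*(1/2:ℝ)^m) := hKbound m
      _ ≤ 2*M*(1/16:ℝ)^m * 8 := mul_le_mul_of_nonneg_left hmono hpos
      _ = 16*M*(1/16:ℝ)^m := by ring
    have hg00 : g (0,0) = h (0,0) - h (1,0) := by
      simp only [hgdef]
      norm_num
    have hfinal : |h (1,0) - h (0,0)| ≤ 16*M*(1/16:ℝ)^m := by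
      rw [abs_sub_comm, ← hg00]
      exact le_trans h00 hKm
    have hlast : 16*M*(1/16:ℝ)^m ≤ 4096*M/2^n := by
      have e1 : (1/16:ℝ)^m = 1/(2:ℝ)^(4*m) := by
        rw [div_pow, one_pow, pow_mul]
        norm_num
      have hle : (2:ℝ)^n ≤ 2^(4*m+8) := by
        apply pow_le_pow_right₀ (by norm_num); omega
      have e2 : (2:ℝ)^(4*m+8) = 256*2^(4*m) := by
        rw [pow_add]; norm_num; ring
      have hp4 : (0:ℝ) < (2:ℝ)^(4*m) := by positivity
      rw [e1, show 16*M*(1/(2:ℝ)^(4*m)) = 16*M/(2:ℝ)^(4*m) by ring,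
        div_le_div_iff₀ hp4 h2p]
      nlinarith [mul_le_mul_of_nonneg_left hle (by linarith : (0:ℝ) ≤ 16*M)]
    linarith
/-- Discrete derivative estimate for harmonic functions: there is a universal constant
`C > 0` such that every function `h` on the box `D_n = {|x| ≤ 2ⁿ, |y| ≤ 2ⁿ} ⊆ ℤ²` that is
discrete harmonic at all interior vertices and bounded by `M` satisfies
`|h(1,0) - h(0,0)| ≤ C·M/2ⁿ` and `|h(0,1) - h(0,0)| ≤ C·M/2ⁿ`. -/
theorem stmt_16 :
    ∃ C : ℝ, 0 < C ∧ ∀ (n : ℕ) (h : ℤ × ℤ → ℝ) (M : ℝ),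
      (∀ p : ℤ × ℤ, |p.1| ≤ 2 ^ n → |p.2| ≤ 2 ^ n → |h p| ≤ M) →
      (∀ p : ℤ × ℤ, |p.1| < 2 ^ n → |p.2| < 2 ^ n →
        4 * h p = h (p.1 + 1, p.2) + h (p.1 - 1, p.2) + h (p.1, p.2 + 1) + h (p.1, p.2 - 1)) →
      |h (1, 0) - h (0, 0)| ≤ C * M / 2 ^ n ∧ |h (0, 1) - h (0, 0)| ≤ C * M / 2 ^ n := by
  refine ⟨4096, by norm_num, ?_⟩
  intro n h M hbd hharm
  constructor
  · exact grad n h M hbd hharm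
  · have hbd' : ∀ p : ℤ × ℤ, |p.1| ≤ 2^n → |p.2| ≤ 2^n → |h (p.2, p.1)| ≤ M :=
      fun p h1 h2 => hbd (p.2, p.1) h2 h1
    have hharm' : ∀ p : ℤ × ℤ, |p.1| < 2^n → |p.2| < 2^n →
        4 * h (p.2, p.1) = h ((p.1+1, p.2).2, (p.1+1, p.2).1) + h ((p.1-1, p.2).2, (p.1-1,p.2).1)
          + h ((p.1, p.2+1).2, (p.1, p.2+1).1) + h ((p.1, p.2-1).2, (p.1, p.2-1).1) := by
      intro p h1 h2
      have := hharm (p.2, p.1) h2 h1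
      simp only at this ⊢
      linarith
    have hres := grad n (fun p => h (p.2, p.1)) M hbd' hharm'
    simpa using hres
end
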